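/- arXiv:2406.05748 — 3 statements merged into one kernel-verified Lean document; each statement's English description precedes it below -/
import Mathlib

section
/- Let r ≥ 2, let Γ : 𝔊^r → ℝ be a symmetrization-increasing map, and let 𝔥 be a family of r-graphs such that Γ is symmetrized-stable with respect to 𝔥. Then for every n ∈ ℕ with ex_Γ(n) > 0, ex_Γ(n) = max{Γ(H) : H ∈ 𝔥 and v(H) = n}. -/
open Finset

attribute [local instance 10] Classical.propDecidable

noncomputable section

/-- An `r`-uniform hypergraph on a finite set of vertices labeled by natural numbers:
a finite collection of `r`-element subsets of the vertex set. -/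
structure RGraph (r : ℕ) where
  verts : Finset ℕ
  edges : Finset (Finset ℕ)
  edge_card : ∀ e ∈ edges, e.card = r
  edge_sub : ∀ e ∈ edges, e ⊆ verts

namespace RGraph

variable {r : ℕ}

/-- number of vertices -/
def nv (H : RGraph r) : ℕ := H.verts.card

/-- delete a set of vertices (and all edges meeting it) -/
def deleteVerts (H : RGraph r) (S : Finset ℕ) : RGraph r where
  verts := H.verts \ S
  edges := H.edges.filter fun e => ∀ v ∈ S, v ∉ e
  edge_card := fun e he => H.edge_card e (Finset.mem_filter.1 he).1
  edge_sub := by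
    intro e he x hx
    rcases Finset.mem_filter.1 he with ⟨he1, he2⟩
    exact Finset.mem_sdiff.2 ⟨H.edge_sub e he1 hx, fun hxS => he2 x hxS hx⟩

/-- delete a single vertex -/
def deleteVert (H : RGraph r) (v : ℕ) : RGraph r := H.deleteVerts {v}

/-- induced subgraph on a set of vertices -/
def induce (H : RGraph r) (U : Finset ℕ) : RGraph r where
  verts := H.verts ∩ U
  edges := H.edges.filter fun e => e ⊆ U
  edge_card := fun e he => H.edge_card e (Finset.mem_filter.1 he).1
  edge_sub := fun e he x hx => Finset.mem_inter.2
    ⟨H.edge_sub e (Finset.mem_filter.1 he).1 hx, (Finset.mem_filter.1 he).2 hx⟩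

/-- delete a single edge -/
def deleteEdge (H : RGraph r) (e : Finset ℕ) : RGraph r where
  verts := H.verts
  edges := H.edges.erase e
  edge_card := fun f hf => H.edge_card f (Finset.mem_of_mem_erase hf)
  edge_sub := fun f hf => H.edge_sub f (Finset.mem_of_mem_erase hf)

/-- subgraph relation (may omit vertices and edges) -/
def IsSubgraph (H' H : RGraph r) : Prop := H'.verts ⊆ H.verts ∧ H'.edges ⊆ H.edges

/-- the link of a vertex -/
def link (H : RGraph r) (v : ℕ) : Finset (Finset ℕ) :=
  (H.edges.filter fun e => v ∈ e).image fun e => e.erase v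

/-- a pair of vertices is uncovered if no edge contains both -/
def Uncovered (H : RGraph r) (u v : ℕ) : Prop := ∀ e ∈ H.edges, ¬(u ∈ e ∧ v ∈ e)

/-- `H.symmetrize u v` is `H_{u → v}`: delete all edges containing `u` and add
`{u} ∪ e` for every `e` in the link of `v`. -/
def symmetrize (H : RGraph r) (u v : ℕ) : RGraph r where
  verts := insert u H.verts
  edges := (H.edges.filter fun e => u ∉ e) ∪
    ((H.edges.filter fun e => v ∈ e ∧ u ∉ e ∧ u ≠ v).image fun e => insert u (e.erase v))
  edge_card := by
    intro e he
    rcases Finset.mem_union.1 he with he | he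
    · exact H.edge_card e (Finset.mem_filter.1 he).1
    · rcases Finset.mem_image.1 he with ⟨f, hf, rfl⟩
      rcases Finset.mem_filter.1 hf with ⟨hf1, hv, hu, -⟩
      have h1 : u ∉ f.erase v := fun h => hu (Finset.mem_of_mem_erase h)
      have hfc := H.edge_card f hf1
      have hr1 : 0 < r := hfc ▸ Finset.card_pos.2 ⟨v, hv⟩
      rw [Finset.card_insert_of_notMem h1, Finset.card_erase_of_mem hv, hfc]
      omega
  edge_sub := by
    intro e he x hx
    rcases Finset.mem_union.1 he with he | he
    · exact Finset.mem_insert_of_mem (H.edge_sub e (Finset.mem_filter.1 he).1 hx)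
    · rcases Finset.mem_image.1 he with ⟨f, hf, rfl⟩
      rcases Finset.mem_insert.1 hx with rfl | hx
      · exact Finset.mem_insert_self _ _
      · exact Finset.mem_insert_of_mem
          (H.edge_sub f (Finset.mem_filter.1 hf).1 (Finset.mem_of_mem_erase hx))

/-- `H` is symmetrized if every uncovered pair of (distinct) vertices is equivalent,
i.e. has equal links. -/
def Symmetrized (H : RGraph r) : Prop :=
  ∀ u ∈ H.verts, ∀ v ∈ H.verts, u ≠ v → H.Uncovered u v → H.link u = H.link v

/-- neighbourhood of a vertex: all vertices sharing an edge with `v` -/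
def nbhd (H : RGraph r) (v : ℕ) : Finset ℕ :=
  H.verts.filter fun u => ∃ e ∈ H.edges, u ∈ e ∧ v ∈ e

/-- the link of a pair of vertices -/
def pairLink (H : RGraph r) (u v : ℕ) : Finset (Finset ℕ) :=
  (H.edges.filter fun e => u ∈ e ∧ v ∈ e).image fun e => (e.erase u).erase v

/-- `N_H^k(v)`: for `r ≥ 3`, the set of vertices `u` whose pair-link with `v`
contains at least `k` pairwise disjoint `(r-2)`-sets; for `r = 2`, the neighbourhood. -/
def bigNbhd (H : RGraph r) (k v : ℕ) : Finset ℕ :=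
  if r = 2 then H.nbhd v
  else H.verts.filter fun u => ∃ A ∈ (H.pairLink u v).powerset,
    k ≤ A.card ∧ ∀ a ∈ A, ∀ b ∈ A, a ≠ b → a ∩ b = ∅

/-- number of edges containing a vertex -/
def edeg (H : RGraph r) (v : ℕ) : ℕ := (H.edges.filter fun e => v ∈ e).card

end RGraph

/-! ## The Γ-framework -/

/-- `Γ`-degree of a vertex -/
def gdeg {r : ℕ} (Γ : RGraph r → ℝ) (H : RGraph r) (v : ℕ) : ℝ :=
  Γ H - Γ (H.deleteVert v)

/-- the extremal number `ex_Γ(n)` -/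
def exG {r : ℕ} (Γ : RGraph r → ℝ) (n : ℕ) : ℝ :=
  sSup {x | ∃ H : RGraph r, H.nv = n ∧ Γ H = x}

/-- the extremal average degree `exdeg_Γ(n) = k ⬝ ex_Γ(n) / n` -/
def exdeg {r : ℕ} (Γ : RGraph r → ℝ) (k : ℝ) (n : ℕ) : ℝ :=
  k * exG Γ n / n

/-- `Γ` is `k`-uniform -/
def IsUniform {r : ℕ} (Γ : RGraph r → ℝ) (k : ℝ) : Prop :=
  ∃ h : ℕ → ℝ, Filter.Tendsto (fun n => h n / exG Γ n) Filter.atTop (nhds 0) ∧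
    ∀ H : RGraph r, 0 < Γ H → |(∑ v ∈ H.verts, gdeg Γ H v) - k * Γ H| ≤ h H.nv

/-- `Γ` is `(δ*, c*, C*)`-smooth -/
def IsSmooth {r : ℕ} (Γ : RGraph r → ℝ) (k δs cs Cs : ℝ) : Prop :=
  ∃ h : ℕ → ℝ, Filter.Tendsto (fun n => h n / exG Γ n) Filter.atTop (nhds 0) ∧
    ∀ (n : ℕ) (δ : ℝ), 0 ≤ δ → δ ≤ δs → ∀ m : ℕ, (m : ℝ) = δ * n →
      exG Γ (n - m) ≤ exG Γ n - δ * k * exG Γ n + Cs * δ ^ (1 + cs) * exG Γ n + h n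

/-- `Γ` is locally `C`-Lipschitz -/
def IsLocallyLipschitz {r : ℕ} (Γ : RGraph r → ℝ) (k C : ℝ) : Prop :=
  ∃ h : ℕ → ℝ, Filter.Tendsto (fun n => h n / exdeg Γ k n) Filter.atTop (nhds 0) ∧
    ∀ (n : ℕ) (H : RGraph r), H.nv = n → 0 < Γ H → ∀ U ⊆ H.verts, ∀ v ∈ U,
      gdeg Γ H v - C * (((n : ℝ) - U.card) / n) * exdeg Γ k n - h n
        ≤ gdeg Γ (H.induce U) v

/-- `Γ` is continuous -/
def GammaContinuous {r : ℕ} (Γ : RGraph r → ℝ) : Prop :=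
  ∀ ε : ℝ, 0 < ε → ∃ δ : ℝ, 0 < δ ∧ ∃ N₀ : ℕ, ∀ n ≥ N₀, ∀ H H' : RGraph r,
    H.nv = n → H'.verts = H.verts → H'.edges ⊆ H.edges →
    (H.edges.card : ℝ) - δ * (n : ℝ) ^ r ≤ (H'.edges.card : ℝ) →
    Γ H - ε * exG Γ n ≤ Γ H'

/-- `Γ` is locally monotone -/
def IsLocallyMonotone {r : ℕ} (Γ : RGraph r → ℝ) : Prop :=
  ∀ H H' : RGraph r, 0 < Γ H → H'.IsSubgraph H → ∀ v ∈ H'.verts,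
    gdeg Γ H' v ≤ gdeg Γ H v

/-- a hereditary family of `r`-graphs -/
def Hereditary {r : ℕ} (ℌ : Set (RGraph r)) : Prop :=
  ∀ H ∈ ℌ, ∀ H' : RGraph r, H'.IsSubgraph H → H' ∈ ℌ

/-- `Γ` is symmetrization-increasing -/
def SymmetrizationIncreasing {r : ℕ} (Γ : RGraph r → ℝ) : Prop :=
  ∀ H : RGraph r, ∀ u ∈ H.verts, ∀ v ∈ H.verts, u ≠ v → H.Uncovered u v →
    Γ H < max (Γ (H.symmetrize u v)) (Γ (H.symmetrize v u)) ∨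
      (Γ H = Γ (H.symmetrize u v) ∧ Γ H = Γ (H.symmetrize v u))

/-- `Γ` is symmetrized-stable with respect to `ℌ` -/
def SymmetrizedStable {r : ℕ} (Γ : RGraph r → ℝ) (ℌ : Set (RGraph r)) : Prop :=
  ∀ H : RGraph r, H.Symmetrized → 0 < Γ H → H ∈ ℌ

/-- `Γ` is `(ε, N₀)`-vertex-extendable with respect to `ℌ` -/
def VertexExtendable {r : ℕ} (Γ : RGraph r → ℝ) (k : ℝ) (ℌ : Set (RGraph r))
    (ε : ℝ) (N₀ : ℕ) : Prop :=
  ∀ n ≥ N₀, ∀ H : RGraph r, H.nv = n →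
    (∀ v ∈ H.verts, (1 - ε) * exdeg Γ k n ≤ gdeg Γ H v) →
    (∃ v ∈ H.verts, H.deleteVert v ∈ ℌ) → H ∈ ℌ

/-- `Γ` is degree-stable with respect to `ℌ` -/
def DegreeStable {r : ℕ} (Γ : RGraph r → ℝ) (k : ℝ) (ℌ : Set (RGraph r)) : Prop :=
  ∃ ε : ℝ, 0 < ε ∧ ∃ N₀ : ℕ, ∀ n ≥ N₀, ∀ H : RGraph r, H.nv = n →
    (∀ v ∈ H.verts, (1 - ε) * exdeg Γ k n ≤ gdeg Γ H v) → H ∈ ℌ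

/-- `Γ` is edge-stable with respect to `ℌ` -/
def EdgeStableG {r : ℕ} (Γ : RGraph r → ℝ) (ℌ : Set (RGraph r)) : Prop :=
  ∀ ε : ℝ, 0 < ε → ∃ δ : ℝ, 0 < δ ∧ ∃ N₀ : ℕ, ∀ n ≥ N₀, ∀ H : RGraph r, H.nv = n →
    (1 - δ) * exG Γ n ≤ Γ H →
    ∃ H' : RGraph r, H'.verts = H.verts ∧ H'.edges ⊆ H.edges ∧
      ((H.edges \ H'.edges).card : ℝ) ≤ ε * (n : ℝ) ^ r ∧ H' ∈ ℌ

/-- `Γh` is a trajectory of `Γ` -/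
def IsTrajectoryOf {r : ℕ} (Γh Γ : RGraph r → ℝ) : Prop :=
  (∃ f : ℕ → ℝ, Filter.Tendsto (fun n => f n / exG Γh n) Filter.atTop (nhds 0) ∧
    ∀ n : ℕ, exG Γh n - f n ≤ exG Γ n) ∧
  ∃ g h : ℕ → ℝ,
    Filter.Tendsto (fun n => g n / (n : ℝ) ^ r) Filter.atTop (nhds 0) ∧
    Filter.Tendsto (fun n => h n / exG Γ n) Filter.atTop (nhds 0) ∧
    ∀ H : RGraph r, 0 < Γ H → ∃ H' : RGraph r, H'.IsSubgraph H ∧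
      (H.edges.card : ℝ) - g H.nv ≤ (H'.edges.card : ℝ) ∧ Γ H - h H.nv ≤ Γh H'

/-! ## Counting injective homomorphisms -/

/-- The set of injective homomorphisms from `Q` to `H`, encoded as maps `ℕ → ℕ`
which are the identity outside `Q.verts`. -/
def injHoms {r : ℕ} (Q H : RGraph r) : Set (ℕ → ℕ) :=
  {φ | Set.InjOn φ ↑Q.verts ∧ Set.MapsTo φ ↑Q.verts ↑H.verts ∧
    (∀ e ∈ Q.edges, e.image φ ∈ H.edges) ∧ ∀ x, x ∉ Q.verts → φ x = x}

/-- `inj(Q, H)`: the number of injective homomorphisms from `Q` to `H` -/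
def injc {r : ℕ} (Q H : RGraph r) : ℕ := (injHoms Q H).ncard

/-- `d_{Q,H}(v)`: the number of injective homomorphisms from `Q` to `H`
whose image contains `v` -/
def qdeg {r : ℕ} (Q H : RGraph r) (v : ℕ) : ℕ :=
  {φ ∈ injHoms Q H | ∃ x ∈ Q.verts, φ x = v}.ncard

/-- `H` is `F₀`-free: `F₀` is not (isomorphic to) a subgraph of `H` -/
def FreeOf {r : ℕ} (F₀ H : RGraph r) : Prop := injHoms F₀ H = ∅

/-- `Q` has no isolated vertices -/
def NoIsolated {r : ℕ} (Q : RGraph r) : Prop := ∀ v ∈ Q.verts, ∃ e ∈ Q.edges, v ∈ e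

/-- `H` is `ℓ`-partite (equivalently, `K_ℓ^r`-colorable) -/
def IsPartite {r : ℕ} (H : RGraph r) (ℓ : ℕ) : Prop :=
  ∃ c : ℕ → ℕ, (∀ v ∈ H.verts, c v < ℓ) ∧
    ∀ e ∈ H.edges, ∀ a ∈ e, ∀ b ∈ e, c a = c b → a = b

/-- chromatic number of an `r`-graph -/
def chrNum {r : ℕ} (H : RGraph r) : ℕ := sInf {ℓ | IsPartite H ℓ}

/-- a graph is edge-critical if deleting some edge lowers its chromatic number -/
def EdgeCritical (F : RGraph 2) : Prop :=
  ∃ e ∈ F.edges, chrNum (F.deleteEdge e) < chrNum F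

/-- an `r`-graph is `2`-covered if every pair of distinct vertices lies in an edge -/
def TwoCovered {r : ℕ} (G : RGraph r) : Prop :=
  ∀ u ∈ G.verts, ∀ v ∈ G.verts, u ≠ v → ∃ e ∈ G.edges, u ∈ e ∧ v ∈ e

/-- `Q` is a blowup (with nonempty parts) of `G` -/
def IsBlowupOf {r : ℕ} (Q G : RGraph r) : Prop :=
  ∃ p : ℕ → ℕ, Set.MapsTo p ↑Q.verts ↑G.verts ∧ Set.SurjOn p ↑Q.verts ↑G.verts ∧
    ∀ e : Finset ℕ, e ⊆ Q.verts → e.card = r →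
      (e ∈ Q.edges ↔ (Set.InjOn p ↑e ∧ e.image p ∈ G.edges))

/-- the shadow `∂_{r-2} G`: the graph of all pairs of vertices covered by an edge -/
def shadow2 {r : ℕ} (G : RGraph r) : RGraph 2 where
  verts := G.verts
  edges := (G.verts.powersetCard 2).filter fun e => ∃ E ∈ G.edges, e ⊆ E
  edge_card := fun e he => (Finset.mem_powersetCard.1 (Finset.mem_filter.1 he).1).2
  edge_sub := fun e he => (Finset.mem_powersetCard.1 (Finset.mem_filter.1 he).1).1

/-- the complete `r`-graph `K_ℓ^r` on vertex set `{0, …, ℓ-1}` -/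
def completeRG (r ℓ : ℕ) : RGraph r where
  verts := Finset.range ℓ
  edges := (Finset.range ℓ).powersetCard r
  edge_card := fun e he => (Finset.mem_powersetCard.1 he).2
  edge_sub := fun e he => (Finset.mem_powersetCard.1 he).1

/-- the complete multipartite `r`-graph on `[n] = {0, …, n-1}` whose parts are the
fibres of the coloring `c`: edges are the rainbow `r`-sets. -/
def completePartite (r n : ℕ) (c : ℕ → ℕ) : RGraph r where
  verts := Finset.range n
  edges := ((Finset.range n).powersetCard r).filter fun e =>
    ∀ a ∈ e, ∀ b ∈ e, c a = c b → a = b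
  edge_card := fun e he => (Finset.mem_powersetCard.1 (Finset.mem_filter.1 he).1).2
  edge_sub := fun e he => (Finset.mem_powersetCard.1 (Finset.mem_filter.1 he).1).1

/-- the `5`-cycle `C₅` -/
def cycle5 : RGraph 2 where
  verts := Finset.range 5
  edges := {{0, 1}, {1, 2}, {2, 3}, {3, 4}, {4, 0}}
  edge_card := by decide
  edge_sub := by decide

/-- the set of (not necessarily injective) homomorphisms from `Q` to `G`,
encoded as maps `ℕ → ℕ` which are the identity outside `Q.verts` -/
def homsSet {r : ℕ} (Q G : RGraph r) : Set (ℕ → ℕ) :=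
  {φ | Set.MapsTo φ ↑Q.verts ↑G.verts ∧ (∀ e ∈ Q.edges, e.image φ ∈ G.edges) ∧
    ∀ x, x ∉ Q.verts → φ x = x}

/-- `E` is the `r`-uniform expansion `H_F^r` of the graph `F` -/
def IsExpansion (r : ℕ) (F : RGraph 2) (E : RGraph r) : Prop :=
  ∃ f : Finset ℕ → Finset ℕ,
    (∀ e ∈ F.edges, (f e).card = r - 2 ∧ Disjoint (f e) F.verts) ∧
    (∀ e ∈ F.edges, ∀ e' ∈ F.edges, e ≠ e' → Disjoint (f e) (f e')) ∧
    E.verts = F.verts ∪ F.edges.biUnion f ∧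
    E.edges = F.edges.image fun e => e ∪ f e

/-- `H` is `H_F^r`-free -/
def ExpansionFree (r : ℕ) (F : RGraph 2) (H : RGraph r) : Prop :=
  ∀ E : RGraph r, IsExpansion r F E → FreeOf E H

/-- `inj(n, Q, H_F^r)` -/
def injExExp (r : ℕ) (Q : RGraph r) (F : RGraph 2) (n : ℕ) : ℕ :=
  sSup {t | ∃ H : RGraph r, H.nv = n ∧ ExpansionFree r F H ∧ injc Q H = t}

/-- `inj(n, Q, F₀)` for a single forbidden `r`-graph `F₀` -/
def injExF {r : ℕ} (Q F₀ : RGraph r) (n : ℕ) : ℕ :=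
  sSup {t | ∃ H : RGraph r, H.nv = n ∧ FreeOf F₀ H ∧ injc Q H = t}

/-- max of `inj(Q, H)` over `ℓ`-partite `H` on `n` vertices -/
def injExPartite (r : ℕ) (Q : RGraph r) (ℓ n : ℕ) : ℕ :=
  sSup {t | ∃ H : RGraph r, H.nv = n ∧ IsPartite H ℓ ∧ injc Q H = t}

/-- `H` is a complete `ℓ`-partite `r`-graph (possibly with empty parts) -/
def IsCompleteMultipartite {r : ℕ} (H : RGraph r) (ℓ : ℕ) : Prop :=
  ∃ c : ℕ → ℕ, (∀ v ∈ H.verts, c v < ℓ) ∧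
    ∀ e : Finset ℕ, e ⊆ H.verts → e.card = r →
      ((∀ a ∈ e, ∀ b ∈ e, c a = c b → a = b) ↔ e ∈ H.edges)

/-- `H` is a complete `k`-partite `r`-graph with nonempty parts -/
def IsCompleteMultipartiteStrict {r : ℕ} (H : RGraph r) (k : ℕ) : Prop :=
  ∃ c : ℕ → ℕ, (∀ v ∈ H.verts, c v < k) ∧ (∀ i < k, ∃ v ∈ H.verts, c v = i) ∧
    ∀ e : Finset ℕ, e ⊆ H.verts → e.card = r →
      ((∀ a ∈ e, ∀ b ∈ e, c a = c b → a = b) ↔ e ∈ H.edges)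

/-- `T` is a balanced complete `ℓ`-partite `r`-graph (part sizes differ by at most one) -/
def IsBalancedCompleteMultipartite {r : ℕ} (T : RGraph r) (ℓ : ℕ) : Prop :=
  ∃ c : ℕ → ℕ, (∀ v ∈ T.verts, c v < ℓ) ∧
    (∀ i < ℓ, ∀ j < ℓ, (T.verts.filter fun v => c v = i).card
      ≤ (T.verts.filter fun v => c v = j).card + 1) ∧
    ∀ e : Finset ℕ, e ⊆ T.verts → e.card = r →
      ((∀ a ∈ e, ∀ b ∈ e, c a = c b → a = b) ↔ e ∈ T.edges)

/-- the `Q`-Lagrange polynomial of `G`, evaluated at a weight vector `x` -/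
def lagPoly {r : ℕ} (Q G : RGraph r) (x : ℕ → ℝ) : ℝ :=
  ∑ᶠ φ ∈ homsSet Q G, ∏ i ∈ Q.verts.image φ, x i

/-- the `Q`-Lagrangian of `G` -/
def lagrangian {r : ℕ} (Q G : RGraph r) : ℝ :=
  sSup {t | ∃ x : ℕ → ℝ, (∀ i, 0 ≤ x i) ∧ (∀ i, i ∉ G.verts → x i = 0) ∧
    (∑ i ∈ G.verts, x i) = 1 ∧ t = lagPoly Q G x}

/-- `W` is a weak expansion of the clique `K_m`: obtained from `K_m` by adding
`r - 2` new vertices to each edge, where the added sets may intersect each other -/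
def IsWeakCliqueExpansion (r m : ℕ) (W : RGraph r) : Prop :=
  ∃ (V : Finset ℕ) (f : Finset ℕ → Finset ℕ), V.card = m ∧
    (∀ e ∈ V.powersetCard 2, (f e).card = r - 2 ∧ Disjoint (f e) V) ∧
    W.verts = V ∪ (V.powersetCard 2).biUnion f ∧
    W.edges = (V.powersetCard 2).image fun e => e ∪ f e

/-- `H` is `𝒦_m^r`-free (contains no weak expansion of `K_m`) -/
def WeakExpFree (r m : ℕ) (H : RGraph r) : Prop :=
  ∀ W : RGraph r, IsWeakCliqueExpansion r m W → FreeOf W H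

/-- `inj(n, Q, 𝒦_m^r)` -/
def injExWeak (r : ℕ) (Q : RGraph r) (m n : ℕ) : ℕ :=
  sSup {t | ∃ H : RGraph r, H.nv = n ∧ WeakExpFree r m H ∧ injc Q H = t}

/-- `F₀` is `Q`-edge-stable with respect to the family of `ℓ`-partite `r`-graphs -/
def QEdgeStablePartite {r : ℕ} (Q F₀ : RGraph r) (ℓ : ℕ) : Prop :=
  ∀ ε : ℝ, 0 < ε → ∃ δ : ℝ, 0 < δ ∧ ∃ N₀ : ℕ, ∀ n ≥ N₀, ∀ H : RGraph r,
    H.nv = n → FreeOf F₀ H → (1 - δ) * (injExF Q F₀ n : ℝ) ≤ (injc Q H : ℝ) →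
    ∃ H' : RGraph r, H'.verts = H.verts ∧ H'.edges ⊆ H.edges ∧
      ((H.edges \ H'.edges).card : ℝ) ≤ ε * (n : ℝ) ^ r ∧ IsPartite H' ℓ

/-- `H_F^r` is `Q`-edge-stable with respect to the family of `ℓ`-partite `r`-graphs -/
def QEdgeStablePartiteExp (r : ℕ) (Q : RGraph r) (F : RGraph 2) (ℓ : ℕ) : Prop :=
  ∀ ε : ℝ, 0 < ε → ∃ δ : ℝ, 0 < δ ∧ ∃ N₀ : ℕ, ∀ n ≥ N₀, ∀ H : RGraph r,
    H.nv = n → ExpansionFree r F H →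
    (1 - δ) * (injExExp r Q F n : ℝ) ≤ (injc Q H : ℝ) →
    ∃ H' : RGraph r, H'.verts = H.verts ∧ H'.edges ⊆ H.edges ∧
      ((H.edges \ H'.edges).card : ℝ) ≤ ε * (n : ℝ) ^ r ∧ IsPartite H' ℓ

/-- `Q` is `F₀`-Turán-stable (with `ℓ` parts) -/
def TuranStableF {r : ℕ} (Q F₀ : RGraph r) (ℓ : ℕ) : Prop :=
  ∀ ε : ℝ, 0 < ε → ∃ δ : ℝ, 0 < δ ∧ ∃ N₀ : ℕ, ∀ n ≥ N₀, ∀ H : RGraph r,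
    H.nv = n → FreeOf F₀ H → (1 - δ) * (injExF Q F₀ n : ℝ) ≤ (injc Q H : ℝ) →
    ∃ T : RGraph r, T.verts = H.verts ∧ IsBalancedCompleteMultipartite T ℓ ∧
      (((H.edges \ T.edges).card + (T.edges \ H.edges).card : ℕ) : ℝ) ≤ ε * (n : ℝ) ^ r

/-- `Q` is `H_F^r`-Turán-stable (with `ℓ` parts) -/
def TuranStableExp (r : ℕ) (Q : RGraph r) (F : RGraph 2) (ℓ : ℕ) : Prop :=
  ∀ ε : ℝ, 0 < ε → ∃ δ : ℝ, 0 < δ ∧ ∃ N₀ : ℕ, ∀ n ≥ N₀, ∀ H : RGraph r,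
    H.nv = n → ExpansionFree r F H →
    (1 - δ) * (injExExp r Q F n : ℝ) ≤ (injc Q H : ℝ) →
    ∃ T : RGraph r, T.verts = H.verts ∧ IsBalancedCompleteMultipartite T ℓ ∧
      (((H.edges \ T.edges).card + (T.edges \ H.edges).card : ℕ) : ℝ) ≤ ε * (n : ℝ) ^ r


namespace S4
open RGraph
variable {r : ℕ}

lemma rg_ext {H K : RGraph r} (h1 : H.verts = K.verts) (h2 : H.edges = K.edges) : H = K := by
  cases H; cases K; congr

def dS (K : RGraph r) (S : Finset ℕ) : ℕ := (K.edges.filter fun e => S ⊆ e).card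

def Phi (K : RGraph r) : ℝ := ∑ S ∈ K.verts.powersetCard (r-1), (dS K S : ℝ)^2

lemma dS_symm (K : RGraph r) (u v : ℕ) (S : Finset ℕ) :
    dS (K.symmetrize u v) S
      = (K.edges.filter fun e => u ∉ e ∧ S ⊆ e).card
      + (K.edges.filter fun e =>
          (v ∈ e ∧ u ∉ e ∧ u ≠ v) ∧ S ⊆ insert u (e.erase v)).card := by
  have hdisj : Disjoint
      ((K.edges.filter fun e => u ∉ e).filter fun e => S ⊆ e)
      (((K.edges.filter fun e => v ∈ e ∧ u ∉ e ∧ u ≠ v).image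
        fun e => insert u (e.erase v)).filter fun e => S ⊆ e) := by
    rw [Finset.disjoint_left]
    intro a ha hb
    have h1 : u ∉ a := (mem_filter.1 (mem_filter.1 ha).1).2
    obtain ⟨f, _, rfl⟩ := mem_image.1 (mem_filter.1 hb).1
    exact h1 (mem_insert_self _ _)
  have hinj : Set.InjOn (fun e : Finset ℕ => insert u (e.erase v))
      (↑(K.edges.filter fun e => v ∈ e ∧ u ∉ e ∧ u ≠ v) : Set (Finset ℕ)) := by
    intro a ha b hb h
    simp only [coe_filter, Set.mem_setOf_eq] at ha hb
    have hua : u ∉ a.erase v := fun h' => ha.2.2.1 (mem_of_mem_erase h')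
    have hub : u ∉ b.erase v := fun h' => hb.2.2.1 (mem_of_mem_erase h')
    have h2 : a.erase v = b.erase v := by
      have := congrArg (fun s => Finset.erase s u) h
      simpa [Finset.erase_insert hua, Finset.erase_insert hub] using this
    calc a = insert v (a.erase v) := (Finset.insert_erase ha.2.1).symm
      _ = insert v (b.erase v) := by rw [h2]
      _ = b := Finset.insert_erase hb.2.1
  show ((((K.edges.filter fun e => u ∉ e) ∪
      ((K.edges.filter fun e => v ∈ e ∧ u ∉ e ∧ u ≠ v).image
        fun e => insert u (e.erase v))).filter fun e => S ⊆ e)).card = _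
  rw [filter_union, card_union_of_disjoint hdisj, filter_filter, Finset.filter_image,
    card_image_of_injOn (hinj.mono (Finset.coe_subset.2 (Finset.filter_subset _ _))),
    filter_filter]

lemma filter_and_mem_card (E : Finset (Finset ℕ)) (p : Finset ℕ → Prop) (u : ℕ) :
    (E.filter fun e => p e ∧ u ∈ e).card + (E.filter fun e => p e ∧ u ∉ e).card
      = (E.filter p).card := by
  have h := Finset.card_filter_add_card_filter_not
    (s := E.filter p) (p := fun e => u ∈ e)
  rw [filter_filter, filter_filter] at h
  exact h

variable {K : RGraph r} {u v : ℕ}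

lemma dS_case_vmem (huv : u ≠ v) (hunc : K.Uncovered u v) {S : Finset ℕ} (hv : v ∈ S) :
    dS (K.symmetrize u v) S = dS K S := by
  rw [dS_symm]
  have h2 : (K.edges.filter fun e =>
      (v ∈ e ∧ u ∉ e ∧ u ≠ v) ∧ S ⊆ insert u (e.erase v)) = ∅ := by
    apply filter_eq_empty_iff.2
    intro e _ hh
    have := hh.2 hv
    rcases mem_insert.1 this with h | h
    · exact huv h.symm
    · exact (Finset.notMem_erase v _) h
  rw [h2, card_empty, add_zero, dS]
  congr 1
  apply filter_congr
  intro e he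
  constructor
  · exact fun h => h.2
  · intro hS
    exact ⟨fun hue => hunc e he ⟨hue, hS hv⟩, hS⟩

lemma dS_case_umem (huv : u ≠ v) (hunc : K.Uncovered u v) {S : Finset ℕ}
    (hu : u ∈ S) (hv : v ∉ S) :
    dS (K.symmetrize u v) S = dS K (insert v (S.erase u)) := by
  rw [dS_symm]
  have h1 : (K.edges.filter fun e => u ∉ e ∧ S ⊆ e) = ∅ := by
    apply filter_eq_empty_iff.2
    intro e _ hh
    exact hh.1 (hh.2 hu)
  rw [h1, card_empty, zero_add, dS]
  congr 1
  apply filter_congr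
  intro e he
  constructor
  · rintro ⟨⟨hve, hue, -⟩, hS⟩
    intro x hx
    rcases mem_insert.1 hx with rfl | hx
    · exact hve
    · have hxS := mem_of_mem_erase hx
      have hxu : x ≠ u := (mem_erase.1 hx).1
      rcases mem_insert.1 (hS hxS) with h | h
      · exact absurd h hxu
      · exact mem_of_mem_erase h
  · intro hT
    have hve : v ∈ e := hT (mem_insert_self _ _)
    have hue : u ∉ e := fun hue => hunc e he ⟨hue, hve⟩
    refine ⟨⟨hve, hue, huv⟩, ?_⟩
    intro x hx
    by_cases hxu : x = u
    · exact hxu ▸ mem_insert_self _ _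
    · have hxe : x ∈ e := hT (mem_insert.2 (Or.inr (mem_erase.2 ⟨hxu, hx⟩)))
      have hxv : x ≠ v := fun h => hv (h ▸ hx)
      exact mem_insert_of_mem (mem_erase.2 ⟨hxv, hxe⟩)

lemma dS_case_none (huv : u ≠ v) (hunc : K.Uncovered u v) {S : Finset ℕ}
    (hu : u ∉ S) (hv : v ∉ S) :
    dS (K.symmetrize u v) S + dS K (insert u S) = dS K S + dS K (insert v S) := by
  rw [dS_symm]
  have h2 : (K.edges.filter fun e =>
      (v ∈ e ∧ u ∉ e ∧ u ≠ v) ∧ S ⊆ insert u (e.erase v)) =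
      (K.edges.filter fun e => insert v S ⊆ e) := by
    apply filter_congr
    intro e he
    constructor
    · rintro ⟨⟨hve, hue, -⟩, hS⟩
      intro x hx
      rcases mem_insert.1 hx with rfl | hx
      · exact hve
      · rcases mem_insert.1 (hS hx) with h | h
        · exact absurd (h ▸ hx) hu
        · exact mem_of_mem_erase h
    · intro hT
      have hve : v ∈ e := hT (mem_insert_self _ _)
      have hue : u ∉ e := fun hue => hunc e he ⟨hue, hve⟩
      refine ⟨⟨hve, hue, huv⟩, ?_⟩
      intro x hx
      have hxe : x ∈ e := hT (mem_insert_of_mem hx)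
      have hxv : x ≠ v := fun h => hv (h ▸ hx)
      exact mem_insert_of_mem (mem_erase.2 ⟨hxv, hxe⟩)
  rw [h2]
  have hsplit := Finset.card_filter_add_card_filter_not
    (p := fun e => u ∈ e) (s := K.edges.filter fun e => S ⊆ e)
  rw [filter_filter, filter_filter] at hsplit
  have ha : (K.edges.filter fun e => S ⊆ e ∧ u ∈ e)
      = K.edges.filter fun e => insert u S ⊆ e := by
    apply filter_congr
    intro e _
    rw [Finset.insert_subset_iff]
    tauto
  have hb : (K.edges.filter fun e => S ⊆ e ∧ u ∉ e)
      = K.edges.filter fun e => u ∉ e ∧ S ⊆ e := by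
    apply filter_congr
    intro e _
    tauto
  rw [ha, hb] at hsplit
  show _ + _ + dS K (insert u S) = dS K S + _
  rw [dS, dS, dS]
  omega

lemma link_witness (hr1 : 1 ≤ r) {K : RGraph r} {u v : ℕ} (hunc : K.Uncovered u v)
    {g : Finset ℕ} (hg : g ∈ K.link u) (hg' : g ∉ K.link v) :
    g ⊆ K.verts ∧ g.card = r - 1 ∧ u ∉ g ∧ v ∉ g ∧
      dS K (insert u g) ≠ dS K (insert v g) := by
  obtain ⟨e, he, rfl⟩ := mem_image.1 hg
  obtain ⟨he1, he2⟩ := mem_filter.1 he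
  have hcard : e.card = r := K.edge_card e he1
  have hsub : (e.erase u) ⊆ K.verts := (Finset.erase_subset _ _).trans (K.edge_sub e he1)
  have hcard' : (e.erase u).card = r - 1 := by rw [Finset.card_erase_of_mem he2, hcard]
  have hu' : u ∉ e.erase u := Finset.notMem_erase _ _
  have hv' : v ∉ e.erase u := fun h => hunc e he1 ⟨he2, mem_of_mem_erase h⟩
  refine ⟨hsub, hcard', hu', hv', ?_⟩
  have ha : 1 ≤ dS K (insert u (e.erase u)) := by
    rw [Finset.insert_erase he2]
    refine Finset.card_pos.2 ⟨e, ?_⟩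
    exact mem_filter.2 ⟨he1, subset_rfl⟩
  have hb : dS K (insert v (e.erase u)) = 0 := by
    rw [dS, Finset.card_eq_zero]
    apply filter_eq_empty_iff.2
    intro f hf hsubf
    apply hg'
    have hcardvg : (insert v (e.erase u)).card = r := by
      rw [Finset.card_insert_of_notMem hv', hcard']
      omega
    have hfeq : insert v (e.erase u) = f := by
      apply Finset.eq_of_subset_of_card_le hsubf
      rw [K.edge_card f hf, hcardvg]
    apply mem_image.2
    refine ⟨f, mem_filter.2 ⟨hf, ?_⟩, ?_⟩
    · rw [← hfeq]; exact mem_insert_self _ _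
    · rw [← hfeq, Finset.erase_insert hv']
  omega

lemma phi_sum (hr1 : 1 ≤ r) {K : RGraph r} {u v : ℕ} (hu : u ∈ K.verts)
    (hv : v ∈ K.verts) (huv : u ≠ v) (hunc : K.Uncovered u v)
    (hL : K.link u ≠ K.link v) :
    2 * Phi K < Phi (K.symmetrize u v) + Phi (K.symmetrize v u) := by
  have huncs : K.Uncovered v u := fun e he h => hunc e he ⟨h.2, h.1⟩
  set A := K.symmetrize u v with hAdef
  set B := K.symmetrize v u with hBdef
  set P := K.verts.powersetCard (r-1) with hPdef
  set F : Finset ℕ → ℝ :=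
    fun S => (dS A S : ℝ)^2 + (dS B S : ℝ)^2 - 2*(dS K S : ℝ)^2 with hFdef
  have hPhiA : Phi A = ∑ S ∈ P, (dS A S : ℝ)^2 := by
    unfold Phi
    rw [show A.verts = K.verts from insert_eq_self.2 hu]
  have hPhiB : Phi B = ∑ S ∈ P, (dS B S : ℝ)^2 := by
    unfold Phi
    rw [show B.verts = K.verts from insert_eq_self.2 hv]
  have hPhiK : Phi K = ∑ S ∈ P, (dS K S : ℝ)^2 := rfl
  have hFsum : ∑ S ∈ P, F S = Phi A + Phi B - 2 * Phi K := by
    rw [hPhiA, hPhiB, hPhiK, hFdef, ← Finset.sum_add_distrib, Finset.mul_sum,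
      ← Finset.sum_sub_distrib]
  -- splitting the index set
  have e1 := Finset.sum_filter_add_sum_filter_not P (fun S => u ∈ S) F
  have e2 := Finset.sum_filter_add_sum_filter_not
    (P.filter (fun S => u ∈ S)) (fun S => v ∈ S) F
  have e3 := Finset.sum_filter_add_sum_filter_not
    (P.filter (fun S => ¬ u ∈ S)) (fun S => v ∈ S) F
  -- the part with u ∈ S and v ∈ S vanishes
  have hP3 : ∑ S ∈ (P.filter (fun S => u ∈ S)).filter (fun S => v ∈ S), F S = 0 := by
    apply Finset.sum_eq_zero
    intro S hS
    have hvS : v ∈ S := (mem_filter.1 hS).2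
    have huS : u ∈ S := (mem_filter.1 (mem_filter.1 hS).1).2
    have a1 : dS A S = dS K S := dS_case_vmem huv hunc hvS
    have a2 : dS B S = dS K S := dS_case_vmem (Ne.symm huv) huncs huS
    rw [hFdef]
    simp only [a1, a2]
    ring
  -- the parts with exactly one of u, v cancel each other
  have hP12 : ∑ S ∈ (P.filter (fun S => u ∈ S)).filter (fun S => ¬ v ∈ S), F S
      + ∑ S ∈ (P.filter (fun S => ¬ u ∈ S)).filter (fun S => v ∈ S), F S = 0 := by
    have hbij : ∑ S ∈ (P.filter (fun S => u ∈ S)).filter (fun S => ¬ v ∈ S), F S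
        = ∑ S ∈ (P.filter (fun S => ¬ u ∈ S)).filter (fun S => v ∈ S), -F S := by
      apply Finset.sum_nbij' (fun S => insert v (S.erase u)) (fun S => insert u (S.erase v))
      · intro S hS
        have hvS : v ∉ S := (mem_filter.1 hS).2
        have huS : u ∈ S := (mem_filter.1 (mem_filter.1 hS).1).2
        have hP' := mem_powersetCard.1 (mem_filter.1 (mem_filter.1 hS).1).1
        have hvS' : v ∉ S.erase u := fun h => hvS (mem_of_mem_erase h)
        refine mem_filter.2 ⟨mem_filter.2 ⟨mem_powersetCard.2 ⟨?_, ?_⟩, ?_⟩, ?_⟩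
        · exact Finset.insert_subset hv ((Finset.erase_subset _ _).trans hP'.1)
        · rw [Finset.card_insert_of_notMem hvS', Finset.card_erase_of_mem huS, hP'.2]
          have : 1 ≤ S.card := Finset.card_pos.2 ⟨u, huS⟩
          omega
        · intro h
          rcases mem_insert.1 h with h | h
          · exact huv h
          · exact (Finset.mem_erase.1 h).1 rfl
        · exact mem_insert_self _ _
      · intro S hS
        have hvS : v ∈ S := (mem_filter.1 hS).2
        have huS : u ∉ S := (mem_filter.1 (mem_filter.1 hS).1).2
        have hP' := mem_powersetCard.1 (mem_filter.1 (mem_filter.1 hS).1).1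
        have huS' : u ∉ S.erase v := fun h => huS (mem_of_mem_erase h)
        refine mem_filter.2 ⟨mem_filter.2 ⟨mem_powersetCard.2 ⟨?_, ?_⟩, ?_⟩, ?_⟩
        · exact Finset.insert_subset hu ((Finset.erase_subset _ _).trans hP'.1)
        · rw [Finset.card_insert_of_notMem huS', Finset.card_erase_of_mem hvS, hP'.2]
          have : 1 ≤ S.card := Finset.card_pos.2 ⟨v, hvS⟩
          omega
        · exact mem_insert_self _ _
        · intro h
          rcases mem_insert.1 h with h | h
          · exact huv h.symm
          · exact (Finset.mem_erase.1 h).1 rfl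
      · intro S hS
        have hvS : v ∉ S := (mem_filter.1 hS).2
        have huS : u ∈ S := (mem_filter.1 (mem_filter.1 hS).1).2
        have hvS' : v ∉ S.erase u := fun h => hvS (mem_of_mem_erase h)
        rw [Finset.erase_insert hvS', Finset.insert_erase huS]
      · intro S hS
        have hvS : v ∈ S := (mem_filter.1 hS).2
        have huS : u ∉ S := (mem_filter.1 (mem_filter.1 hS).1).2
        have huS' : u ∉ S.erase v := fun h => huS (mem_of_mem_erase h)
        rw [Finset.erase_insert huS', Finset.insert_erase hvS]
      · intro S hS
        have hvS : v ∉ S := (mem_filter.1 hS).2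
        have huS : u ∈ S := (mem_filter.1 (mem_filter.1 hS).1).2
        have hvS' : v ∉ S.erase u := fun h => hvS (mem_of_mem_erase h)
        have a1 : dS A S = dS K (insert v (S.erase u)) := dS_case_umem huv hunc huS hvS
        have a2 : dS B S = dS K S := dS_case_vmem (Ne.symm huv) huncs huS
        have a3 : dS A (insert v (S.erase u)) = dS K (insert v (S.erase u)) :=
          dS_case_vmem huv hunc (mem_insert_self _ _)
        have a4 : dS B (insert v (S.erase u)) = dS K S := by
          have h4 := dS_case_umem (Ne.symm huv) huncs (mem_insert_self v (S.erase u))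
            (show u ∉ insert v (S.erase u) by
              intro h
              rcases mem_insert.1 h with h | h
              · exact huv h
              · exact (Finset.mem_erase.1 h).1 rfl)
          rw [h4, Finset.erase_insert hvS', Finset.insert_erase huS]
        rw [hFdef]
        simp only [a1, a2, a3, a4]
        ring
    rw [hbij, ← Finset.sum_add_distrib]
    apply Finset.sum_eq_zero
    intro S _
    ring
  -- the part avoiding u and v is positive
  have hpt : ∀ S, u ∉ S → v ∉ S →
      (0 ≤ F S ∧ (dS K (insert u S) ≠ dS K (insert v S) → 0 < F S)) := by
    intro S huS hvS
    have c1 : (dS A S : ℝ) + (dS K (insert u S) : ℝ)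
        = (dS K S : ℝ) + (dS K (insert v S) : ℝ) := by
      exact_mod_cast congrArg (Nat.cast (R := ℝ)) (dS_case_none huv hunc huS hvS)
    have c2 : (dS B S : ℝ) + (dS K (insert v S) : ℝ)
        = (dS K S : ℝ) + (dS K (insert u S) : ℝ) := by
      exact_mod_cast congrArg (Nat.cast (R := ℝ)) (dS_case_none (Ne.symm huv) huncs hvS huS)
    have hA1 : (dS A S : ℝ) = (dS K S : ℝ) + (dS K (insert v S) : ℝ) - (dS K (insert u S) : ℝ) := by
      linarith
    have hB1 : (dS B S : ℝ) = (dS K S : ℝ) + (dS K (insert u S) : ℝ) - (dS K (insert v S) : ℝ) := by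
      linarith
    constructor
    · rw [hFdef]
      simp only [hA1, hB1]
      nlinarith [sq_nonneg ((dS K (insert u S) : ℝ) - (dS K (insert v S) : ℝ))]
    · intro hne
      have hne' : (dS K (insert u S) : ℝ) ≠ (dS K (insert v S) : ℝ) := by
        exact_mod_cast hne
      have hne'' : (dS K (insert u S) : ℝ) - (dS K (insert v S) : ℝ) ≠ 0 :=
        sub_ne_zero.2 hne'
      rw [hFdef]
      simp only [hA1, hB1]
      nlinarith [mul_self_pos.2 hne'']
  have hgw : ∃ g : Finset ℕ, g ⊆ K.verts ∧ g.card = r - 1 ∧ u ∉ g ∧ v ∉ g ∧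
      dS K (insert u g) ≠ dS K (insert v g) := by
    obtain ⟨g, hg⟩ : ∃ g, (g ∈ K.link u ∧ g ∉ K.link v) ∨ (g ∈ K.link v ∧ g ∉ K.link u) := by
      by_contra h
      push_neg at h
      apply hL
      ext g
      constructor
      · intro hg
        by_contra hg'
        exact absurd ((h g).1 hg) hg'
      · intro hg
        by_contra hg'
        exact absurd ((h g).2 hg) hg'
    rcases hg with ⟨hg1, hg2⟩ | ⟨hg1, hg2⟩
    · obtain ⟨p1, p2, p3, p4, p5⟩ := link_witness hr1 hunc hg1 hg2
      exact ⟨g, p1, p2, p3, p4, p5⟩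
    · obtain ⟨p1, p2, p3, p4, p5⟩ := link_witness hr1 huncs hg1 hg2
      exact ⟨g, p1, p2, p4, p3, Ne.symm p5⟩
  obtain ⟨g, hg1, hg2, hg3, hg4, hg5⟩ := hgw
  have hgmem : g ∈ (P.filter (fun S => ¬ u ∈ S)).filter (fun S => ¬ v ∈ S) :=
    mem_filter.2 ⟨mem_filter.2 ⟨mem_powersetCard.2 ⟨hg1, hg2⟩, hg3⟩, hg4⟩
  have hP0 : 0 < ∑ S ∈ (P.filter (fun S => ¬ u ∈ S)).filter (fun S => ¬ v ∈ S), F S := by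
    have hle : F g ≤ ∑ S ∈ (P.filter (fun S => ¬ u ∈ S)).filter (fun S => ¬ v ∈ S), F S := by
      apply Finset.single_le_sum _ hgmem
      intro S hS
      exact (hpt S (mem_filter.1 (mem_filter.1 hS).1).2 (mem_filter.1 hS).2).1
    have hFg : 0 < F g := (hpt g hg3 hg4).2 hg5
    linarith
  linarith [e1, e2, e3, hP3, hP12, hP0, hFsum]


def mkG (r : ℕ) (V : Finset ℕ) (E : Finset (Finset ℕ)) : RGraph r where
  verts := V
  edges := E.filter fun e => e.card = r ∧ e ⊆ V
  edge_card := fun e he => (mem_filter.1 he).2.1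
  edge_sub := fun e he => (mem_filter.1 he).2.2

lemma mkG_eq (K : RGraph r) : mkG r K.verts K.edges = K := by
  apply rg_ext
  · rfl
  · show K.edges.filter _ = K.edges
    apply filter_true_of_mem
    intro e he
    exact ⟨K.edge_card e he, K.edge_sub e he⟩

lemma key (hr1 : 1 ≤ r) (Γ : RGraph r → ℝ) (ℌ : Set (RGraph r))
    (hsymInc : SymmetrizationIncreasing Γ) (hsymStab : SymmetrizedStable Γ ℌ)
    (H : RGraph r) (hpos : 0 < Γ H) :
    ∃ H' : RGraph r, H' ∈ ℌ ∧ H'.verts = H.verts ∧ Γ H ≤ Γ H' := by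
  set T : Finset (Finset (Finset ℕ)) := (H.verts.powersetCard r).powerset with hT
  have hmemT : ∀ K : RGraph r, K.verts = H.verts → K.edges ∈ T := by
    intro K hK
    apply mem_powerset.2
    intro e he
    exact mem_powersetCard.2 ⟨hK ▸ K.edge_sub e he, K.edge_card e he⟩
  obtain ⟨E1, hE1, hmax1⟩ := T.exists_max_image (fun E => Γ (mkG r H.verts E))
    ⟨H.edges, hmemT H rfl⟩
  obtain ⟨E2, hE2, hmax2⟩ :=
    (T.filter fun E => Γ (mkG r H.verts E) = Γ (mkG r H.verts E1)).exists_max_image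
      (fun E => Phi (mkG r H.verts E)) ⟨E1, mem_filter.2 ⟨hE1, rfl⟩⟩
  set Hs := mkG r H.verts E2 with hHs
  have hE2T : E2 ∈ T := (mem_filter.1 hE2).1
  have hE2G : Γ Hs = Γ (mkG r H.verts E1) := (mem_filter.1 hE2).2
  have hVs : Hs.verts = H.verts := rfl
  have hmk : ∀ K : RGraph r, K.verts = H.verts → mkG r H.verts K.edges = K := by
    intro K hK
    rw [← hK]
    exact mkG_eq K
  have hGmax : ∀ K : RGraph r, K.verts = H.verts → Γ K ≤ Γ Hs := by
    intro K hK
    have h := hmax1 K.edges (hmemT K hK)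
    rw [hmk K hK] at h
    rw [hE2G]
    exact h
  have hPmax : ∀ K : RGraph r, K.verts = H.verts → Γ K = Γ Hs → Phi K ≤ Phi Hs := by
    intro K hK hGK
    have hmem : K.edges ∈ T.filter fun E => Γ (mkG r H.verts E) = Γ (mkG r H.verts E1) := by
      apply mem_filter.2
      refine ⟨hmemT K hK, ?_⟩
      rw [hmk K hK, hGK, hE2G]
    have h := hmax2 K.edges hmem
    rw [hmk K hK] at h
    exact h
  have hsym : Hs.Symmetrized := by
    intro u hu v hv huv hunc
    by_contra hL
    have hA : (Hs.symmetrize u v).verts = H.verts := by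
      show insert u Hs.verts = H.verts
      exact insert_eq_self.2 hu
    have hB : (Hs.symmetrize v u).verts = H.verts := by
      show insert v Hs.verts = H.verts
      exact insert_eq_self.2 hv
    have hGA : Γ (Hs.symmetrize u v) ≤ Γ Hs := hGmax _ hA
    have hGB : Γ (Hs.symmetrize v u) ≤ Γ Hs := hGmax _ hB
    rcases hsymInc Hs u hu v hv huv hunc with hlt | ⟨heq1, heq2⟩
    · rcases lt_max_iff.1 hlt with h | h <;> linarith
    · have h1 : Phi (Hs.symmetrize u v) ≤ Phi Hs := hPmax _ hA heq1.symm
      have h2 : Phi (Hs.symmetrize v u) ≤ Phi Hs := hPmax _ hB heq2.symm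
      have h3 := phi_sum hr1 hu hv huv hunc hL
      linarith
  have hGH : Γ H ≤ Γ Hs := hGmax H rfl
  exact ⟨Hs, hsymStab Hs hsym (lt_of_lt_of_le hpos hGH), hVs, hGH⟩

end S4

/-- **Theorem (Statement 4).** If `Γ` is symmetrization-increasing and symmetrized-stable
with respect to `ℌ`, then for every `n` with `ex_Γ(n) > 0`, the extremal value `ex_Γ(n)`
is attained within the family `ℌ`. -/
theorem statement4 {r : ℕ} (hr : 2 ≤ r) (Γ : RGraph r → ℝ) (ℌ : Set (RGraph r))
    (hsymInc : SymmetrizationIncreasing Γ)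
    (hsymStab : SymmetrizedStable Γ ℌ) :
    ∀ n : ℕ, 0 < exG Γ n →
      exG Γ n = sSup {x | ∃ H : RGraph r, H ∈ ℌ ∧ H.nv = n ∧ Γ H = x} := by
  intro n hpos
  have hr1 : 1 ≤ r := le_trans (by norm_num) hr
  set Sf : Set ℝ := {x | ∃ H : RGraph r, H.nv = n ∧ Γ H = x} with hSf
  set Sh : Set ℝ := {x | ∃ H : RGraph r, H ∈ ℌ ∧ H.nv = n ∧ Γ H = x} with hSh
  have hpos' : 0 < sSup Sf := hpos
  have hbdd : BddAbove Sf := by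
    by_contra h
    rw [Real.sSup_of_not_bddAbove h] at hpos'
    exact lt_irrefl _ hpos'
  have hne : Sf.Nonempty := by
    by_contra h
    rw [Set.not_nonempty_iff_eq_empty] at h
    rw [h, Real.sSup_empty] at hpos'
    exact lt_irrefl _ hpos'
  obtain ⟨x0, hx0, hx0p⟩ := exists_lt_of_lt_csSup hne hpos'
  obtain ⟨H0, hH0n, hH0x⟩ := hx0
  have hH0p : 0 < Γ H0 := by rw [hH0x]; exact hx0p
  obtain ⟨Hst, hstm, hstv, hstle⟩ := S4.key hr1 Γ ℌ hsymInc hsymStab H0 hH0p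
  have hstn : Hst.nv = n := by rw [RGraph.nv, hstv]; exact hH0n
  have hsub : Sh ⊆ Sf := by rintro x ⟨H, -, h2, h3⟩; exact ⟨H, h2, h3⟩
  have hShne : Sh.Nonempty := ⟨Γ Hst, Hst, hstm, hstn, rfl⟩
  have hShbdd : BddAbove Sh := hbdd.mono hsub
  have hstpos : 0 < Γ Hst := lt_of_lt_of_le hH0p hstle
  show sSup Sf = sSup Sh
  apply le_antisymm
  · apply csSup_le hne
    rintro x ⟨H, hHn, rfl⟩
    by_cases hp : 0 < Γ H
    · obtain ⟨H', h1, h2, h3⟩ := S4.key hr1 Γ ℌ hsymInc hsymStab H hp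
      have hmem : Γ H' ∈ Sh := ⟨H', h1, by rw [RGraph.nv, h2]; exact hHn, rfl⟩
      exact le_trans h3 (le_csSup hShbdd hmem)
    · push_neg at hp
      have hmem : Γ Hst ∈ Sh := ⟨Hst, hstm, hstn, rfl⟩
      have := le_csSup hShbdd hmem
      linarith
  · exact csSup_le_csSup hbdd hShne hsub

end
end

section
/- There exist ε > 0 and N₀ such that the following holds for all n ≥ N₀: if G is an n-vertex triangle-free graph with δ_{C5}(G) ≥ (10 − ε)·(n/5)^4 and there exists a vertex v ∈ V(G) such that G − v is C5-colorable, then G is C5-colorable. -/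
open Finset

attribute [local instance 10] Classical.propDecidable

noncomputable section

/-! ## Auxiliary material for Statement 8 -/

/-- adjacency in a 2-graph -/
def EE (G : RGraph 2) (a b : ℕ) : Prop := ({a, b} : Finset ℕ) ∈ G.edges

lemma EE.symm {G : RGraph 2} {a b : ℕ} (h : EE G a b) : EE G b a := by
  unfold EE at *; rwa [Finset.pair_comm]

lemma EE.ne {G : RGraph 2} {a b : ℕ} (h : EE G a b) : a ≠ b := by
  rintro rfl
  have := G.edge_card _ h
  simp at this

lemma EE.mem_left {G : RGraph 2} {a b : ℕ} (h : EE G a b) : a ∈ G.verts :=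
  G.edge_sub _ h (by simp)

lemma EE.mem_right {G : RGraph 2} {a b : ℕ} (h : EE G a b) : b ∈ G.verts :=
  G.edge_sub _ h (by simp)

/-- closed chains of length 5 through `u` -/
def T4 (G : RGraph 2) (u : ℕ) : Finset (ℕ × ℕ × ℕ × ℕ) :=
  (G.verts ×ˢ G.verts ×ˢ G.verts ×ˢ G.verts).filter fun p =>
    EE G u p.1 ∧ EE G p.1 p.2.1 ∧ EE G p.2.1 p.2.2.1 ∧ EE G p.2.2.1 p.2.2.2 ∧
      EE G p.2.2.2 u

lemma edge_pair {G : RGraph 2} {e : Finset ℕ} (he : e ∈ G.edges) :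
    ∃ a b, a ≠ b ∧ e = {a, b} := by
  have := G.edge_card e he
  obtain ⟨a, b, hab, rfl⟩ := Finset.card_eq_two.1 this
  exact ⟨a, b, hab, rfl⟩

lemma image_pair' (f : ℕ → ℕ) (a b : ℕ) :
    Finset.image f ({a, b} : Finset ℕ) = {f a, f b} := by
  simp [Finset.image_insert]

/-- triangle-freeness in terms of `EE` -/
lemma tri_free {G : RGraph 2} (hfree : FreeOf (completeRG 2 3) G)
    {a b c : ℕ} (hab : EE G a b) (hbc : EE G b c) (hac : EE G a c) : False := by
  have hane : a ≠ b := hab.ne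
  have hbne : b ≠ c := hbc.ne
  have hacne : a ≠ c := hac.ne
  apply Set.notMem_empty (fun x => if x = 0 then a else if x = 1 then b else if x = 2 then c else x)
  rw [← hfree]
  show _ ∈ injHoms (completeRG 2 3) G
  refine ⟨?_, ?_, ?_, ?_⟩
  · intro x hx y hy hxy
    simp only [completeRG, Finset.coe_range, Set.mem_Iio] at hx hy
    interval_cases x <;> interval_cases y <;> simp_all
  · intro x hx
    simp only [completeRG, Finset.coe_range, Set.mem_Iio] at hx
    interval_cases x <;> simp [hab.mem_left, hab.mem_right, hbc.mem_right]
  · intro e he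
    simp only [completeRG, Finset.mem_powersetCard] at he
    obtain ⟨hsub, hcard⟩ := he
    obtain ⟨x, y, hxy, rfl⟩ := Finset.card_eq_two.1 hcard
    have hx : x < 3 := by simpa using hsub (by simp : x ∈ ({x, y} : Finset ℕ))
    have hy : y < 3 := by simpa using hsub (by simp : y ∈ ({x, y} : Finset ℕ))
    rw [image_pair']
    interval_cases x <;> interval_cases y <;>
      simp_all [EE, Finset.pair_comm] <;> omega
  · intro x hx
    simp only [completeRG, Finset.mem_range] at hx
    have h0 : x ≠ 0 := by omega
    have h1 : x ≠ 1 := by omega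
    have h2 : x ≠ 2 := by omega
    simp [h0, h1, h2]

lemma cyc_edge_mem : ∀ k < 5, ({k, (k + 1) % 5} : Finset ℕ) ∈ cycle5.edges := by decide

lemma cyc_adj_iff : ∀ p < 5, ∀ q < 5,
    (({p, q} : Finset ℕ) ∈ cycle5.edges ↔ ((p + 1) % 5 = q ∨ (q + 1) % 5 = p)) := by decide

lemma range5_cover : ∀ k < 5, ∀ m < 5,
    m = k ∨ m = (k + 1) % 5 ∨ m = (k + 2) % 5 ∨ m = (k + 3) % 5 ∨ m = (k + 4) % 5 := by
  decide

/-- transfer: the `C₅`-degree is at most five times the number of labelled chains -/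
lemma qdeg_le_T4 (G : RGraph 2) (u : ℕ) : qdeg cycle5 G u ≤ 5 * (T4 G u).card := by
  classical
  unfold qdeg
  set S : Set (ℕ → ℕ) :=
    {φ ∈ injHoms cycle5 G | ∃ x ∈ cycle5.verts, φ x = u} with hS
  set f : (ℕ → ℕ) → ℕ × (ℕ × ℕ × ℕ × ℕ) := fun φ =>
    if h : ∃ x, x < 5 ∧ φ x = u then
      (Nat.find h, (φ ((Nat.find h + 1) % 5), φ ((Nat.find h + 2) % 5),
        φ ((Nat.find h + 3) % 5), φ ((Nat.find h + 4) % 5)))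
    else (0, (0, 0, 0, 0)) with hf
  have hex : ∀ φ ∈ S, ∃ x, x < 5 ∧ φ x = u := by
    rintro φ ⟨hhom, x, hx, hxu⟩
    exact ⟨x, by simpa [cycle5] using hx, hxu⟩
  -- key facts about f on S
  have hfval : ∀ φ (h : ∃ x, x < 5 ∧ φ x = u), f φ =
      (Nat.find h, (φ ((Nat.find h + 1) % 5), φ ((Nat.find h + 2) % 5),
        φ ((Nat.find h + 3) % 5), φ ((Nat.find h + 4) % 5))) := by
    intro φ h; simp [hf, h]
  have hinj : Set.InjOn f S := by
    intro φ hφ φ' hφ' hfe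
    have h1 := hex φ hφ
    have h2 := hex φ' hφ'
    rw [hfval φ h1, hfval φ' h2] at hfe
    have hk : Nat.find h1 = Nat.find h2 := congrArg Prod.fst hfe
    set k := Nat.find h1 with hkdef
    have hk5 : k < 5 := (Nat.find_spec h1).1
    have hφk : φ k = u := (Nat.find_spec h1).2
    have hφ'k : φ' k = u := by
      have := (Nat.find_spec h2)
      rw [← hk] at this; exact this.2
    have htup := congrArg Prod.snd hfe
    simp only [Prod.mk.injEq, ← hk] at htup
    obtain ⟨e1, e2, e3, e4⟩ := htup
    funext x
    by_cases hx : x < 5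
    · rcases range5_cover k hk5 x hx with rfl | rfl | rfl | rfl | rfl
      · rw [hφk, hφ'k]
      · exact e1
      · exact e2
      · exact e3
      · exact e4
    · have hid1 := hφ.1.2.2.2 x (by simpa [cycle5] using hx)
      have hid2 := hφ'.1.2.2.2 x (by simpa [cycle5] using hx)
      rw [hid1, hid2]
  have himg : f '' S ⊆ ↑((Finset.range 5) ×ˢ T4 G u) := by
    rintro _ ⟨φ, hφ, rfl⟩
    have h1 := hex φ hφ
    rw [hfval φ h1]
    set k := Nat.find h1 with hkdef
    have hk5 : k < 5 := (Nat.find_spec h1).1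
    have hφk : φ k = u := (Nat.find_spec h1).2
    obtain ⟨⟨hinjφ, hmaps, hedges, hid⟩, -⟩ := hφ
    have hmem : ∀ m, m < 5 → φ m ∈ G.verts := by
      intro m hm
      exact hmaps (by simpa [cycle5] using hm)
    have hE : ∀ m, m < 5 → EE G (φ m) (φ ((m + 1) % 5)) := by
      intro m hm
      have := hedges _ (cyc_edge_mem m hm)
      rwa [image_pair'] at this
    simp only [Finset.coe_mem, Finset.mem_coe, Finset.mem_product, Finset.mem_range]
    refine ⟨hk5, ?_⟩
    unfold T4
    rw [Finset.mem_filter]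
    have m1 : (k + 1) % 5 < 5 := Nat.mod_lt _ (by norm_num)
    have m2 : (k + 2) % 5 < 5 := Nat.mod_lt _ (by norm_num)
    have m3 : (k + 3) % 5 < 5 := Nat.mod_lt _ (by norm_num)
    have m4 : (k + 4) % 5 < 5 := Nat.mod_lt _ (by norm_num)
    refine ⟨by simp [Finset.mem_product, hmem _ m1, hmem _ m2, hmem _ m3, hmem _ m4], ?_, ?_, ?_, ?_, ?_⟩
    · have := hE k hk5; rwa [hφk] at this
    · have := hE _ m1
      have h12 : ((k + 1) % 5 + 1) % 5 = (k + 2) % 5 := by omega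
      rwa [h12] at this
    · have := hE _ m2
      have h23 : ((k + 2) % 5 + 1) % 5 = (k + 3) % 5 := by omega
      rwa [h23] at this
    · have := hE _ m3
      have h34 : ((k + 3) % 5 + 1) % 5 = (k + 4) % 5 := by omega
      rwa [h34] at this
    · have := hE _ m4
      have h45 : ((k + 4) % 5 + 1) % 5 = k := by omega
      rw [h45, hφk] at this
      exact this
  calc S.ncard = (f '' S).ncard := (Set.ncard_image_of_injOn hinj).symm
    _ ≤ ((Finset.range 5 ×ˢ T4 G u : Finset _) : Set _).ncard :=
        Set.ncard_le_ncard himg (Finset.finite_toSet _)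
    _ = 5 * (T4 G u).card := by
        rw [Set.ncard_coe_finset, Finset.card_product, Finset.card_range]

/-- color classes (excluding the special vertex `v`) -/
def VcD (G : RGraph 2) (ψ : ℕ → ℕ) (v j : ℕ) : Finset ℕ :=
  (G.verts.erase v).filter fun x => ψ x = j

/-- neighbours of `u` in color class `j` -/
def NuD (G : RGraph 2) (ψ : ℕ → ℕ) (v u j : ℕ) : Finset ℕ :=
  (VcD G ψ v j).filter fun w => EE G u w

lemma mem_VcD {G : RGraph 2} {ψ : ℕ → ℕ} {v j x : ℕ} :
    x ∈ VcD G ψ v j ↔ x ∈ G.verts ∧ x ≠ v ∧ ψ x = j := by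
  unfold VcD
  simp only [Finset.mem_filter, Finset.mem_erase]
  tauto

lemma mem_NuD {G : RGraph 2} {ψ : ℕ → ℕ} {v u j x : ℕ} :
    x ∈ NuD G ψ v u j ↔ (x ∈ G.verts ∧ x ≠ v ∧ ψ x = j) ∧ EE G u x := by
  unfold NuD
  simp only [Finset.mem_filter, mem_VcD]

lemma NuD_subset {G : RGraph 2} {ψ : ℕ → ℕ} {v u j : ℕ} :
    NuD G ψ v u j ⊆ VcD G ψ v j := Finset.filter_subset _ _

lemma card_union6 {α : Type*} [DecidableEq α] (A B C D E F : Finset α) :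
    (A ∪ B ∪ C ∪ D ∪ E ∪ F).card ≤
      A.card + B.card + C.card + D.card + E.card + F.card := by
  have h1 := Finset.card_union_le (A ∪ B ∪ C ∪ D ∪ E) F
  have h2 := Finset.card_union_le (A ∪ B ∪ C ∪ D) E
  have h3 := Finset.card_union_le (A ∪ B ∪ C) D
  have h4 := Finset.card_union_le (A ∪ B) C
  have h5 := Finset.card_union_le A B
  omega

lemma card_union3 {α : Type*} [DecidableEq α] (A B C : Finset α) :
    (A ∪ B ∪ C).card ≤ A.card + B.card + C.card := by
  have h1 := Finset.card_union_le (A ∪ B) C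
  have h2 := Finset.card_union_le A B
  omega

lemma amgm4 {x y z w : ℝ} (hx : 0 ≤ x) (hy : 0 ≤ y) (hz : 0 ≤ z) (hw : 0 ≤ w) :
    x * y * z * w ≤ ((x + y + z + w) / 4) ^ 4 := by
  have h1 : x * y ≤ ((x + y) / 2) ^ 2 := by nlinarith [sq_nonneg (x - y)]
  have h2 : z * w ≤ ((z + w) / 2) ^ 2 := by nlinarith [sq_nonneg (z - w)]
  have h3 : ((x + y) / 2) * ((z + w) / 2) ≤ (((x + y) / 2 + (z + w) / 2) / 2) ^ 2 := by
    nlinarith [sq_nonneg ((x + y) / 2 - (z + w) / 2)]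
  have h4 : (0 : ℝ) ≤ (x + y) / 2 := by linarith
  have h5 : (0 : ℝ) ≤ (z + w) / 2 := by linarith
  calc x * y * z * w = (x * y) * (z * w) := by ring
    _ ≤ ((x + y) / 2) ^ 2 * ((z + w) / 2) ^ 2 := by
        apply mul_le_mul h1 h2 (by positivity) (by positivity)
    _ = (((x + y) / 2) * ((z + w) / 2)) ^ 2 := by ring
    _ ≤ ((((x + y) / 2 + (z + w) / 2) / 2) ^ 2) ^ 2 := by
        apply pow_le_pow_left₀ (by positivity) h3
    _ = ((x + y + z + w) / 4) ^ 4 := by ring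

set_option maxHeartbeats 1000000 in
/-- counting chains at a vertex `u ≠ v` -/
lemma countB2 (G : RGraph 2) (ψ : ℕ → ℕ) (v : ℕ) (n : ℕ) (hGn : G.verts.card = n)
    (Hψlt : ∀ x ∈ G.verts, x ≠ v → ψ x < 5)
    (Hψe : ∀ a b, EE G a b → a ≠ v → b ≠ v → ({ψ a, ψ b} : Finset ℕ) ∈ cycle5.edges)
    (u : ℕ) (hu : u ∈ G.verts) (huv : u ≠ v) :
    (T4 G u).card ≤
      (NuD G ψ v u ((ψ u + 1) % 5)).card * ((VcD G ψ v ((ψ u + 2) % 5)).card *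
        ((VcD G ψ v ((ψ u + 3) % 5)).card * (NuD G ψ v u ((ψ u + 4) % 5)).card)) +
      (NuD G ψ v u ((ψ u + 4) % 5)).card * ((VcD G ψ v ((ψ u + 3) % 5)).card *
        ((VcD G ψ v ((ψ u + 2) % 5)).card * (NuD G ψ v u ((ψ u + 1) % 5)).card)) +
      4 * (n * n * n) := by
  classical
  have hj : ψ u < 5 := Hψlt u hu huv
  set S1 := NuD G ψ v u ((ψ u + 1) % 5) ×ˢ VcD G ψ v ((ψ u + 2) % 5) ×ˢ
      VcD G ψ v ((ψ u + 3) % 5) ×ˢ NuD G ψ v u ((ψ u + 4) % 5) with hS1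
  set S2 := NuD G ψ v u ((ψ u + 4) % 5) ×ˢ VcD G ψ v ((ψ u + 3) % 5) ×ˢ
      VcD G ψ v ((ψ u + 2) % 5) ×ˢ NuD G ψ v u ((ψ u + 1) % 5) with hS2
  set W1 := ({v} : Finset ℕ) ×ˢ G.verts ×ˢ G.verts ×ˢ G.verts with hW1
  set W2 := G.verts ×ˢ ({v} : Finset ℕ) ×ˢ G.verts ×ˢ G.verts with hW2
  set W3 := G.verts ×ˢ G.verts ×ˢ ({v} : Finset ℕ) ×ˢ G.verts with hW3
  set W4 := G.verts ×ˢ G.verts ×ˢ G.verts ×ˢ ({v} : Finset ℕ) with hW4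
  have hsub : T4 G u ⊆ S1 ∪ S2 ∪ W1 ∪ W2 ∪ W3 ∪ W4 := by
    rintro ⟨x1, x2, x3, x4⟩ hp
    unfold T4 at hp
    rw [Finset.mem_filter] at hp
    obtain ⟨hmemp, e0, e1, e2, e3, e4⟩ := hp
    simp only [Finset.mem_product] at hmemp
    obtain ⟨hx1, hx2, hx3, hx4⟩ := hmemp
    simp only [Finset.mem_union]
    by_cases h1 : x1 = v
    · subst h1
      have : (x1, x2, x3, x4) ∈ W1 := by
        simp only [hW1, Finset.mem_product]
        exact ⟨Finset.mem_singleton_self _, hx2, hx3, hx4⟩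
      exact Or.inl (Or.inl (Or.inl (Or.inr this)))
    by_cases h2 : x2 = v
    · have : (x1, x2, x3, x4) ∈ W2 := by
        subst h2
        simp only [hW2, Finset.mem_product]
        exact ⟨hx1, Finset.mem_singleton_self _, hx3, hx4⟩
      exact Or.inl (Or.inl (Or.inr this))
    by_cases h3 : x3 = v
    · have : (x1, x2, x3, x4) ∈ W3 := by
        subst h3
        simp only [hW3, Finset.mem_product]
        exact ⟨hx1, hx2, Finset.mem_singleton_self _, hx4⟩
      exact Or.inl (Or.inr this)
    by_cases h4 : x4 = v
    · have : (x1, x2, x3, x4) ∈ W4 := by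
        subst h4
        simp only [hW4, Finset.mem_product]
        exact ⟨hx1, hx2, hx3, Finset.mem_singleton_self _⟩
      exact Or.inr this
    -- main case: all distinct from v
    have hm1 : ψ x1 < 5 := Hψlt x1 hx1 h1
    have hm2 : ψ x2 < 5 := Hψlt x2 hx2 h2
    have hm3 : ψ x3 < 5 := Hψlt x3 hx3 h3
    have hm4 : ψ x4 < 5 := Hψlt x4 hx4 h4
    have a0 := (cyc_adj_iff _ hj _ hm1).1 (Hψe u x1 e0 huv h1)
    have a1 := (cyc_adj_iff _ hm1 _ hm2).1 (Hψe x1 x2 e1 h1 h2)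
    have a2 := (cyc_adj_iff _ hm2 _ hm3).1 (Hψe x2 x3 e2 h2 h3)
    have a3 := (cyc_adj_iff _ hm3 _ hm4).1 (Hψe x3 x4 e3 h3 h4)
    have a4 := (cyc_adj_iff _ hm4 _ hj).1 (Hψe x4 u e4 h4 huv)
    have hpat : (ψ x1 = (ψ u + 1) % 5 ∧ ψ x2 = (ψ u + 2) % 5 ∧ ψ x3 = (ψ u + 3) % 5 ∧
        ψ x4 = (ψ u + 4) % 5) ∨
        (ψ x1 = (ψ u + 4) % 5 ∧ ψ x2 = (ψ u + 3) % 5 ∧ ψ x3 = (ψ u + 2) % 5 ∧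
        ψ x4 = (ψ u + 1) % 5) := by omega
    rcases hpat with ⟨p1, p2, p3, p4⟩ | ⟨p1, p2, p3, p4⟩
    · have : (x1, x2, x3, x4) ∈ S1 := by
        simp only [hS1, Finset.mem_product]
        exact ⟨mem_NuD.2 ⟨⟨hx1, h1, p1⟩, e0⟩, mem_VcD.2 ⟨hx2, h2, p2⟩,
          mem_VcD.2 ⟨hx3, h3, p3⟩, mem_NuD.2 ⟨⟨hx4, h4, p4⟩, e4.symm⟩⟩
      exact Or.inl (Or.inl (Or.inl (Or.inl (Or.inl this))))
    · have : (x1, x2, x3, x4) ∈ S2 := by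
        simp only [hS2, Finset.mem_product]
        exact ⟨mem_NuD.2 ⟨⟨hx1, h1, p1⟩, e0⟩, mem_VcD.2 ⟨hx2, h2, p2⟩,
          mem_VcD.2 ⟨hx3, h3, p3⟩, mem_NuD.2 ⟨⟨hx4, h4, p4⟩, e4.symm⟩⟩
      exact Or.inl (Or.inl (Or.inl (Or.inl (Or.inr this))))
  have hcard := (Finset.card_le_card hsub).trans (card_union6 S1 S2 W1 W2 W3 W4)
  have c1 : S1.card = (NuD G ψ v u ((ψ u + 1) % 5)).card * ((VcD G ψ v ((ψ u + 2) % 5)).card *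
      ((VcD G ψ v ((ψ u + 3) % 5)).card * (NuD G ψ v u ((ψ u + 4) % 5)).card)) := by
    simp [hS1, Finset.card_product]
  have c2 : S2.card = (NuD G ψ v u ((ψ u + 4) % 5)).card * ((VcD G ψ v ((ψ u + 3) % 5)).card *
      ((VcD G ψ v ((ψ u + 2) % 5)).card * (NuD G ψ v u ((ψ u + 1) % 5)).card)) := by
    simp [hS2, Finset.card_product]
  have w1 : W1.card = n * n * n := by simp [hW1, Finset.card_product, hGn]; ring
  have w2 : W2.card = n * n * n := by simp [hW2, Finset.card_product, hGn]; ring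
  have w3 : W3.card = n * n * n := by simp [hW3, Finset.card_product, hGn]; ring
  have w4 : W4.card = n * n * n := by simp [hW4, Finset.card_product, hGn]; ring
  omega

/-- the off-diagonal index set -/
def ODset : Finset (ℕ × ℕ) := (Finset.range 5 ×ˢ Finset.range 5).filter fun p => p.1 ≠ p.2

set_option maxHeartbeats 1000000 in
/-- counting chains at the special vertex `v` -/
lemma countB3 (G : RGraph 2) (ψ : ℕ → ℕ) (v : ℕ) (n : ℕ) (hGn : G.verts.card = n)
    (Hψlt : ∀ x ∈ G.verts, x ≠ v → ψ x < 5)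
    (Hψe : ∀ a b, EE G a b → a ≠ v → b ≠ v → ({ψ a, ψ b} : Finset ℕ) ∈ cycle5.edges) :
    (T4 G v).card ≤
      (∑ p ∈ ODset, (NuD G ψ v v p.1).card * (n * (n * (NuD G ψ v v p.2).card))) +
      2 * (n * n * n) := by
  classical
  set BU := ODset.biUnion (fun p => NuD G ψ v v p.1 ×ˢ G.verts ×ˢ G.verts ×ˢ NuD G ψ v v p.2)
    with hBU
  set W2 := G.verts ×ˢ ({v} : Finset ℕ) ×ˢ G.verts ×ˢ G.verts with hW2
  set W3 := G.verts ×ˢ G.verts ×ˢ ({v} : Finset ℕ) ×ˢ G.verts with hW3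
  have hsub : T4 G v ⊆ BU ∪ W2 ∪ W3 := by
    rintro ⟨x1, x2, x3, x4⟩ hp
    unfold T4 at hp
    rw [Finset.mem_filter] at hp
    obtain ⟨hmemp, e0, e1, e2, e3, e4⟩ := hp
    simp only [Finset.mem_product] at hmemp
    obtain ⟨hx1, hx2, hx3, hx4⟩ := hmemp
    simp only [Finset.mem_union]
    have h1 : x1 ≠ v := fun h => e0.ne (h.symm)
    have h4 : x4 ≠ v := e4.ne
    by_cases h2 : x2 = v
    · have : (x1, x2, x3, x4) ∈ W2 := by
        subst h2
        simp only [hW2, Finset.mem_product]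
        exact ⟨hx1, Finset.mem_singleton_self _, hx3, hx4⟩
      exact Or.inl (Or.inr this)
    by_cases h3 : x3 = v
    · have : (x1, x2, x3, x4) ∈ W3 := by
        subst h3
        simp only [hW3, Finset.mem_product]
        exact ⟨hx1, hx2, Finset.mem_singleton_self _, hx4⟩
      exact Or.inr this
    have hm1 : ψ x1 < 5 := Hψlt x1 hx1 h1
    have hm2 : ψ x2 < 5 := Hψlt x2 hx2 h2
    have hm3 : ψ x3 < 5 := Hψlt x3 hx3 h3
    have hm4 : ψ x4 < 5 := Hψlt x4 hx4 h4
    have a1 := (cyc_adj_iff _ hm1 _ hm2).1 (Hψe x1 x2 e1 h1 h2)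
    have a2 := (cyc_adj_iff _ hm2 _ hm3).1 (Hψe x2 x3 e2 h2 h3)
    have a3 := (cyc_adj_iff _ hm3 _ hm4).1 (Hψe x3 x4 e3 h3 h4)
    have hne : ψ x1 ≠ ψ x4 := by omega
    have : (x1, x2, x3, x4) ∈ BU := by
      rw [hBU, Finset.mem_biUnion]
      refine ⟨(ψ x1, ψ x4), ?_, ?_⟩
      · unfold ODset
        simp only [Finset.mem_filter, Finset.mem_product, Finset.mem_range]
        exact ⟨⟨hm1, hm4⟩, hne⟩
      · simp only [Finset.mem_product]
        exact ⟨mem_NuD.2 ⟨⟨hx1, h1, rfl⟩, e0⟩, hx2, hx3,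
          mem_NuD.2 ⟨⟨hx4, h4, rfl⟩, e4.symm⟩⟩
    exact Or.inl (Or.inl this)
  have hcard := (Finset.card_le_card hsub).trans (card_union3 BU W2 W3)
  have cBU : BU.card ≤ ∑ p ∈ ODset, (NuD G ψ v v p.1).card * (n * (n * (NuD G ψ v v p.2).card)) := by
    refine (Finset.card_biUnion_le).trans ?_
    apply Finset.sum_le_sum
    intro p _
    simp [Finset.card_product, hGn]
  have w2 : W2.card = n * n * n := by simp [hW2, Finset.card_product, hGn]; ring
  have w3 : W3.card = n * n * n := by simp [hW3, Finset.card_product, hGn]; ring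
  omega

lemma countB2R_a (G : RGraph 2) (ψ : ℕ → ℕ) (v : ℕ) (n : ℕ) (hGn : G.verts.card = n)
    (Hψlt : ∀ x ∈ G.verts, x ≠ v → ψ x < 5)
    (Hψe : ∀ a b, EE G a b → a ≠ v → b ≠ v → ({ψ a, ψ b} : Finset ℕ) ∈ cycle5.edges)
    (u : ℕ) (hu : u ∈ G.verts) (huv : u ≠ v) :
    ((T4 G u).card : ℝ) ≤ 2 * (((VcD G ψ v ((ψ u + 1) % 5)).card : ℝ) *
      ((VcD G ψ v ((ψ u + 2) % 5)).card : ℝ) * ((VcD G ψ v ((ψ u + 3) % 5)).card : ℝ) *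
      ((VcD G ψ v ((ψ u + 4) % 5)).card : ℝ)) + 4 * (n : ℝ) ^ 3 := by
  have h := countB2 G ψ v n hGn Hψlt Hψe u hu huv
  have hc : ((T4 G u).card : ℝ) ≤
      ((NuD G ψ v u ((ψ u + 1) % 5)).card : ℝ) * (((VcD G ψ v ((ψ u + 2) % 5)).card : ℝ) *
        (((VcD G ψ v ((ψ u + 3) % 5)).card : ℝ) * ((NuD G ψ v u ((ψ u + 4) % 5)).card : ℝ))) +
      ((NuD G ψ v u ((ψ u + 4) % 5)).card : ℝ) * (((VcD G ψ v ((ψ u + 3) % 5)).card : ℝ) *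
        (((VcD G ψ v ((ψ u + 2) % 5)).card : ℝ) * ((NuD G ψ v u ((ψ u + 1) % 5)).card : ℝ))) +
      4 * ((n : ℝ) * (n : ℝ) * (n : ℝ)) := by exact_mod_cast h
  have hd1 : ((NuD G ψ v u ((ψ u + 1) % 5)).card : ℝ) ≤ ((VcD G ψ v ((ψ u + 1) % 5)).card : ℝ) := by
    exact_mod_cast Finset.card_le_card NuD_subset
  have hd4 : ((NuD G ψ v u ((ψ u + 4) % 5)).card : ℝ) ≤ ((VcD G ψ v ((ψ u + 4) % 5)).card : ℝ) := by
    exact_mod_cast Finset.card_le_card NuD_subset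
  have g1 : ((NuD G ψ v u ((ψ u + 1) % 5)).card : ℝ) * (((VcD G ψ v ((ψ u + 2) % 5)).card : ℝ) *
        (((VcD G ψ v ((ψ u + 3) % 5)).card : ℝ) * ((NuD G ψ v u ((ψ u + 4) % 5)).card : ℝ))) ≤
      ((VcD G ψ v ((ψ u + 1) % 5)).card : ℝ) * (((VcD G ψ v ((ψ u + 2) % 5)).card : ℝ) *
        (((VcD G ψ v ((ψ u + 3) % 5)).card : ℝ) * ((VcD G ψ v ((ψ u + 4) % 5)).card : ℝ))) := by
    gcongr
  have g2 : ((NuD G ψ v u ((ψ u + 4) % 5)).card : ℝ) * (((VcD G ψ v ((ψ u + 3) % 5)).card : ℝ) *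
        (((VcD G ψ v ((ψ u + 2) % 5)).card : ℝ) * ((NuD G ψ v u ((ψ u + 1) % 5)).card : ℝ))) ≤
      ((VcD G ψ v ((ψ u + 4) % 5)).card : ℝ) * (((VcD G ψ v ((ψ u + 3) % 5)).card : ℝ) *
        (((VcD G ψ v ((ψ u + 2) % 5)).card : ℝ) * ((VcD G ψ v ((ψ u + 1) % 5)).card : ℝ))) := by
    gcongr
  nlinarith [g1, g2, hc]

lemma countB2R_d (G : RGraph 2) (ψ : ℕ → ℕ) (v : ℕ) (n : ℕ) (hGn : G.verts.card = n)
    (Hψlt : ∀ x ∈ G.verts, x ≠ v → ψ x < 5)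
    (Hψe : ∀ a b, EE G a b → a ≠ v → b ≠ v → ({ψ a, ψ b} : Finset ℕ) ∈ cycle5.edges)
    (u : ℕ) (hu : u ∈ G.verts) (huv : u ≠ v) :
    ((T4 G u).card : ℝ) ≤ 2 * (((NuD G ψ v u ((ψ u + 1) % 5)).card : ℝ) *
      ((VcD G ψ v ((ψ u + 2) % 5)).card : ℝ) * ((VcD G ψ v ((ψ u + 3) % 5)).card : ℝ) *
      ((NuD G ψ v u ((ψ u + 4) % 5)).card : ℝ)) + 4 * (n : ℝ) ^ 3 := by
  have h := countB2 G ψ v n hGn Hψlt Hψe u hu huv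
  have hc : ((T4 G u).card : ℝ) ≤
      ((NuD G ψ v u ((ψ u + 1) % 5)).card : ℝ) * (((VcD G ψ v ((ψ u + 2) % 5)).card : ℝ) *
        (((VcD G ψ v ((ψ u + 3) % 5)).card : ℝ) * ((NuD G ψ v u ((ψ u + 4) % 5)).card : ℝ))) +
      ((NuD G ψ v u ((ψ u + 4) % 5)).card : ℝ) * (((VcD G ψ v ((ψ u + 3) % 5)).card : ℝ) *
        (((VcD G ψ v ((ψ u + 2) % 5)).card : ℝ) * ((NuD G ψ v u ((ψ u + 1) % 5)).card : ℝ))) +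
      4 * ((n : ℝ) * (n : ℝ) * (n : ℝ)) := by exact_mod_cast h
  nlinarith [hc]

lemma countB3R (G : RGraph 2) (ψ : ℕ → ℕ) (v : ℕ) (n : ℕ) (hGn : G.verts.card = n)
    (Hψlt : ∀ x ∈ G.verts, x ≠ v → ψ x < 5)
    (Hψe : ∀ a b, EE G a b → a ≠ v → b ≠ v → ({ψ a, ψ b} : Finset ℕ) ∈ cycle5.edges) :
    ((T4 G v).card : ℝ) ≤ (n : ℝ) ^ 2 * (∑ p ∈ ODset,
      ((NuD G ψ v v p.1).card : ℝ) * ((NuD G ψ v v p.2).card : ℝ)) + 2 * (n : ℝ) ^ 3 := by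
  have h := countB3 G ψ v n hGn Hψlt Hψe
  have hc : ((T4 G v).card : ℝ) ≤ (∑ p ∈ ODset,
      ((NuD G ψ v v p.1).card : ℝ) * ((n : ℝ) * ((n : ℝ) * ((NuD G ψ v v p.2).card : ℝ)))) +
      2 * ((n : ℝ) * (n : ℝ) * (n : ℝ)) := by exact_mod_cast h
  have he : (∑ p ∈ ODset, ((NuD G ψ v v p.1).card : ℝ) *
      ((n : ℝ) * ((n : ℝ) * ((NuD G ψ v v p.2).card : ℝ)))) =
      (n : ℝ) ^ 2 * (∑ p ∈ ODset, ((NuD G ψ v v p.1).card : ℝ) * ((NuD G ψ v v p.2).card : ℝ)) := by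
    rw [Finset.mul_sum]
    apply Finset.sum_congr rfl
    intro p _
    ring
  rw [he] at hc
  nlinarith [hc]

lemma class_upper {nn a0 a1 a2 a3 a4 : ℝ} (h1 : 0 ≤ a1) (h2 : 0 ≤ a2) (h3 : 0 ≤ a3)
    (h4 : 0 ≤ a4) (hsum : a0 + a1 + a2 + a3 + a4 ≤ nn)
    (hP : (9999/10000) * (nn/5)^4 ≤ a1 * a2 * a3 * a4)
    (hnn : (10:ℝ)^9 ≤ nn) : a0 ≤ (1 + 4/10000) * (nn/5) := by
  have hs : 4/5 * (9999/10000) * nn ≤ a1 + a2 + a3 + a4 := by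
    by_contra hcon
    push_neg at hcon
    have hag := amgm4 h1 h2 h3 h4
    have hq : ((a1 + a2 + a3 + a4)/4)^4 < ((4/5 * (9999/10000) * nn)/4)^4 := by
      apply pow_lt_pow_left₀ (by linarith) (by linarith) (by norm_num)
    have hr : ((4/5 * (9999/10000) * nn)/4)^4 = (9999/10000)^4 * (nn/5)^4 := by ring
    have hpos : (0:ℝ) < (nn/5)^4 := by
      apply pow_pos; linarith
    nlinarith [hag, hq, hP]
  linarith

lemma deg_lower {nn d1 d4 a1 a2 a3 a4 T : ℝ}
    (hd1 : 0 ≤ d1) (hd4 : 0 ≤ d4) (hd1a : d1 ≤ a1) (hd4a : d4 ≤ a4)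
    (ha2 : 0 ≤ a2) (ha3 : 0 ≤ a3)
    (hA1 : a1 ≤ (1 + 4/10000) * (nn/5)) (hA2 : a2 ≤ (1 + 4/10000) * (nn/5))
    (hA3 : a3 ≤ (1 + 4/10000) * (nn/5)) (hA4 : a4 ≤ (1 + 4/10000) * (nn/5))
    (hT : (10 - 1/10000) * (nn/5)^4 ≤ 5 * T)
    (hC : T ≤ 2 * (d1 * a2 * a3 * d4) + 4 * nn^3)
    (hnn : (10:ℝ)^9 ≤ nn) :
    (1997/10000) * nn ≤ d1 ∧ (1997/10000) * nn ≤ d4 := by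
  have hnn0 : (0:ℝ) < nn := by linarith
  have hA0 : (0:ℝ) ≤ (1 + 4/10000) * (nn/5) := by positivity
  have h3 : (0:ℝ) < nn^3 := by positivity
  have hint2 : (10:ℝ)^9 * nn^3 ≤ nn * nn^3 := by
    apply mul_le_mul_of_nonneg_right hnn (le_of_lt h3)
  have t1 : a2 * a3 ≤ ((1 + 4/10000) * (nn/5))^2 := by
    rw [sq]
    exact mul_le_mul hA2 hA3 ha3 hA0
  constructor
  · have t2 : a2 * a3 * d4 ≤ ((1 + 4/10000) * (nn/5))^2 * ((1 + 4/10000) * (nn/5)) := by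
      apply mul_le_mul t1 (hd4a.trans hA4) hd4 (by positivity)
    have t3 : d1 * (a2 * a3 * d4) ≤ d1 * (((1 + 4/10000) * (nn/5))^2 * ((1 + 4/10000) * (nn/5))) :=
      mul_le_mul_of_nonneg_left t2 hd1
    by_contra hcon
    push_neg at hcon
    have hint1 : d1 * nn^3 < (1997/10000) * nn * nn^3 := by
      apply mul_lt_mul_of_pos_right hcon h3
    nlinarith [t3, hT, hC, hint1, hint2]
  · have t2 : a2 * a3 * d1 ≤ ((1 + 4/10000) * (nn/5))^2 * ((1 + 4/10000) * (nn/5)) := by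
      apply mul_le_mul t1 (hd1a.trans hA1) hd1 (by positivity)
    have t3 : d4 * (a2 * a3 * d1) ≤ d4 * (((1 + 4/10000) * (nn/5))^2 * ((1 + 4/10000) * (nn/5))) :=
      mul_le_mul_of_nonneg_left t2 hd4
    by_contra hcon
    push_neg at hcon
    have hint1 : d4 * nn^3 < (1997/10000) * nn * nn^3 := by
      apply mul_lt_mul_of_pos_right hcon h3
    nlinarith [t3, hT, hC, hint1, hint2]

lemma ODset_card : ODset.card = 20 := by decide

set_option maxHeartbeats 1600000 in
/-- **Theorem (Statement 8, vertex-extendability for the Erdős Pentagon problem).**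
There exist `ε > 0` and `N₀` such that for every `n ≥ N₀`: if `G` is an `n`-vertex
triangle-free graph with minimum `C₅`-degree at least `(10 - ε)(n/5)⁴` and `G - v` is
`C₅`-colorable for some vertex `v`, then `G` is `C₅`-colorable. -/
theorem statement8 :
    ∃ ε : ℝ, 0 < ε ∧ ∃ N₀ : ℕ, ∀ n ≥ N₀, ∀ G : RGraph 2, G.nv = n →
      FreeOf (completeRG 2 3) G →
      (∀ v ∈ G.verts, (10 - ε) * ((n : ℝ) / 5) ^ 4 ≤ (qdeg cycle5 G v : ℝ)) →
      (∃ v ∈ G.verts, (homsSet (G.deleteVert v) cycle5).Nonempty) →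
      (homsSet G cycle5).Nonempty := by
  refine ⟨1/10000, by norm_num, 1000000000, ?_⟩
  intro n hn G hnv hfree hdeg hex
  classical
  obtain ⟨v, hv, ψ, hψ⟩ := hex
  obtain ⟨hmap, hedge, hid⟩ := hψ
  have hGn : G.verts.card = n := hnv
  have hn' : (10:ℝ)^9 ≤ (n:ℝ) := by
    have : (1000000000 : ℕ) ≤ n := hn
    exact_mod_cast this
  have hnn0 : (0:ℝ) < (n:ℝ) := by linarith
  have hdelv : (G.deleteVert v).verts = G.verts \ {v} := rfl
  have Hψlt : ∀ x ∈ G.verts, x ≠ v → ψ x < 5 := by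
    intro x hx hxv
    have hxm : x ∈ (G.deleteVert v).verts := by
      rw [hdelv, Finset.mem_sdiff]
      simp [hx, hxv]
    have := hmap (Finset.mem_coe.2 hxm)
    simpa [cycle5] using this
  have Hψe : ∀ a b, EE G a b → a ≠ v → b ≠ v →
      ({ψ a, ψ b} : Finset ℕ) ∈ cycle5.edges := by
    intro a b hab hav hbv
    have he : ({a, b} : Finset ℕ) ∈ (G.deleteVert v).edges := by
      show _ ∈ Finset.filter _ _
      rw [Finset.mem_filter]
      refine ⟨hab, ?_⟩
      intro w hw
      rw [Finset.mem_singleton] at hw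
      subst hw
      simp [Ne.symm hav, Ne.symm hbv]
    have := hedge _ he
    rwa [image_pair'] at this
  -- minimum C5-degree in terms of chains
  have HT : ∀ u ∈ G.verts, (10 - 1/10000 : ℝ) * ((n:ℝ)/5)^4 ≤ 5 * ((T4 G u).card : ℝ) := by
    intro u hu
    have h1 := hdeg u hu
    have h2 : (qdeg cycle5 G u : ℝ) ≤ 5 * ((T4 G u).card : ℝ) := by
      exact_mod_cast qdeg_le_T4 G u
    linarith
  -- class products are large
  have HP : ∀ i < 5, (VcD G ψ v i).Nonempty →
      (1 - 1/10000 : ℝ) * ((n:ℝ)/5)^4 ≤ ((VcD G ψ v ((i+1)%5)).card : ℝ) *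
        ((VcD G ψ v ((i+2)%5)).card : ℝ) * ((VcD G ψ v ((i+3)%5)).card : ℝ) *
        ((VcD G ψ v ((i+4)%5)).card : ℝ) := by
    intro i hi5 hne
    obtain ⟨u, hu⟩ := hne
    rw [mem_VcD] at hu
    obtain ⟨hu1, hu2, hu3⟩ := hu
    have h1 := HT u hu1
    have h2 := countB2R_a G ψ v n hGn Hψlt Hψe u hu1 hu2
    rw [hu3] at h2
    have h3 : (0:ℝ) ≤ (n:ℝ)^3 := by positivity
    have hint2 : (10:ℝ)^9 * (n:ℝ)^3 ≤ (n:ℝ) * (n:ℝ)^3 := mul_le_mul_of_nonneg_right hn' h3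
    nlinarith [h1, h2, hint2]
  -- all classes nonempty
  have HNE : ∀ j < 5, (VcD G ψ v j).Nonempty := by
    have hcard : (G.verts.erase v).Nonempty := by
      rw [← Finset.card_pos, Finset.card_erase_of_mem hv, hGn]
      omega
    obtain ⟨u0, hu0⟩ := hcard
    have hu0v : u0 ∈ G.verts := Finset.mem_of_mem_erase hu0
    have hu0ne : u0 ≠ v := Finset.ne_of_mem_erase hu0
    have hi0 : ψ u0 < 5 := Hψlt u0 hu0v hu0ne
    have hne0 : (VcD G ψ v (ψ u0)).Nonempty := ⟨u0, mem_VcD.2 ⟨hu0v, hu0ne, rfl⟩⟩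
    have hP := HP (ψ u0) hi0 hne0
    have hpos : (0:ℝ) < (1 - 1/10000) * ((n:ℝ)/5)^4 := by
      have : (0:ℝ) < ((n:ℝ)/5)^4 := by positivity
      nlinarith [this]
    intro j hj
    rcases eq_or_ne j (ψ u0) with rfl | hne
    · exact hne0
    · rw [← Finset.card_pos]
      by_contra h
      push_neg at h
      have hz : (VcD G ψ v j).card = 0 := by omega
      have hzR : ((VcD G ψ v j).card : ℝ) = 0 := by exact_mod_cast hz
      have hj4 : j = (ψ u0 + 1) % 5 ∨ j = (ψ u0 + 2) % 5 ∨ j = (ψ u0 + 3) % 5 ∨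
          j = (ψ u0 + 4) % 5 := by omega
      rcases hj4 with rfl | rfl | rfl | rfl <;> rw [hzR] at hP <;> nlinarith [hP, hpos]
  -- classes pairwise disjoint, total size at most n
  have hVsub : ∀ j, VcD G ψ v j ⊆ G.verts := by
    intro j x hx
    exact (mem_VcD.1 hx).1
  have hdisj : ∀ i j : ℕ, i ≠ j → Disjoint (VcD G ψ v i) (VcD G ψ v j) := by
    intro i j hij
    rw [Finset.disjoint_left]
    intro x hx1 hx2
    rw [mem_VcD] at hx1 hx2
    exact hij (hx1.2.2 ▸ hx2.2.2 ▸ rfl)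
  have hsum5 : (VcD G ψ v 0).card + (VcD G ψ v 1).card + (VcD G ψ v 2).card +
      (VcD G ψ v 3).card + (VcD G ψ v 4).card ≤ n := by
    have d01 : Disjoint (VcD G ψ v 0) (VcD G ψ v 1) := hdisj 0 1 (by norm_num)
    have d012 : Disjoint (VcD G ψ v 0 ∪ VcD G ψ v 1) (VcD G ψ v 2) := by
      rw [Finset.disjoint_union_left]
      exact ⟨hdisj 0 2 (by norm_num), hdisj 1 2 (by norm_num)⟩
    have d0123 : Disjoint (VcD G ψ v 0 ∪ VcD G ψ v 1 ∪ VcD G ψ v 2) (VcD G ψ v 3) := by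
      rw [Finset.disjoint_union_left, Finset.disjoint_union_left]
      exact ⟨⟨hdisj 0 3 (by norm_num), hdisj 1 3 (by norm_num)⟩, hdisj 2 3 (by norm_num)⟩
    have d01234 : Disjoint (VcD G ψ v 0 ∪ VcD G ψ v 1 ∪ VcD G ψ v 2 ∪ VcD G ψ v 3)
        (VcD G ψ v 4) := by
      rw [Finset.disjoint_union_left, Finset.disjoint_union_left, Finset.disjoint_union_left]
      exact ⟨⟨⟨hdisj 0 4 (by norm_num), hdisj 1 4 (by norm_num)⟩, hdisj 2 4 (by norm_num)⟩,
        hdisj 3 4 (by norm_num)⟩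
    have hsub : VcD G ψ v 0 ∪ VcD G ψ v 1 ∪ VcD G ψ v 2 ∪ VcD G ψ v 3 ∪ VcD G ψ v 4 ⊆
        G.verts := by
      intro x hx
      simp only [Finset.mem_union] at hx
      rcases hx with ((((h|h)|h)|h)|h) <;> exact hVsub _ h
    have := Finset.card_le_card hsub
    rw [Finset.card_union_of_disjoint d01234, Finset.card_union_of_disjoint d0123,
      Finset.card_union_of_disjoint d012, Finset.card_union_of_disjoint d01, hGn] at this
    omega
  have hsumR : ((VcD G ψ v 0).card : ℝ) + ((VcD G ψ v 1).card : ℝ) + ((VcD G ψ v 2).card : ℝ) +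
      ((VcD G ψ v 3).card : ℝ) + ((VcD G ψ v 4).card : ℝ) ≤ (n:ℝ) := by
    exact_mod_cast hsum5
  -- upper bound on class sizes
  have HA : ∀ j < 5, ((VcD G ψ v j).card : ℝ) ≤ (1 + 4/10000) * ((n:ℝ)/5) := by
    intro j hj
    interval_cases j
    · have hp := HP 0 (by norm_num) (HNE 0 (by norm_num))
      norm_num at hp
      refine class_upper ?_ ?_ ?_ ?_ ?_ hp hn'
      · positivity
      · positivity
      · positivity
      · positivity
      · linarith [hsumR]
    · have hp := HP 1 (by norm_num) (HNE 1 (by norm_num))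
      norm_num at hp
      refine class_upper ?_ ?_ ?_ ?_ ?_ hp hn'
      · positivity
      · positivity
      · positivity
      · positivity
      · linarith [hsumR]
    · have hp := HP 2 (by norm_num) (HNE 2 (by norm_num))
      norm_num at hp
      refine class_upper ?_ ?_ ?_ ?_ ?_ hp hn'
      · positivity
      · positivity
      · positivity
      · positivity
      · linarith [hsumR]
    · have hp := HP 3 (by norm_num) (HNE 3 (by norm_num))
      norm_num at hp
      refine class_upper ?_ ?_ ?_ ?_ ?_ hp hn'
      · positivity
      · positivity
      · positivity
      · positivity
      · linarith [hsumR]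
    · have hp := HP 4 (by norm_num) (HNE 4 (by norm_num))
      norm_num at hp
      refine class_upper ?_ ?_ ?_ ?_ ?_ hp hn'
      · positivity
      · positivity
      · positivity
      · positivity
      · linarith [hsumR]
  -- degree bounds
  have HD : ∀ u ∈ G.verts, u ≠ v →
      (1997/10000) * (n:ℝ) ≤ ((NuD G ψ v u ((ψ u + 1) % 5)).card : ℝ) ∧
      (1997/10000) * (n:ℝ) ≤ ((NuD G ψ v u ((ψ u + 4) % 5)).card : ℝ) := by
    intro u hu huv
    have hT := HT u hu
    have hC := countB2R_d G ψ v n hGn Hψlt Hψe u hu huv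
    have hd1a : ((NuD G ψ v u ((ψ u + 1) % 5)).card : ℝ) ≤
        ((VcD G ψ v ((ψ u + 1) % 5)).card : ℝ) := by
      exact_mod_cast Finset.card_le_card NuD_subset
    have hd4a : ((NuD G ψ v u ((ψ u + 4) % 5)).card : ℝ) ≤
        ((VcD G ψ v ((ψ u + 4) % 5)).card : ℝ) := by
      exact_mod_cast Finset.card_le_card NuD_subset
    have h := deg_lower (by positivity) (by positivity) hd1a hd4a (by positivity) (by positivity)
      (HA _ (Nat.mod_lt _ (by norm_num))) (HA _ (Nat.mod_lt _ (by norm_num)))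
      (HA _ (Nat.mod_lt _ (by norm_num))) (HA _ (Nat.mod_lt _ (by norm_num))) hT hC hn'
    exact h
  -- the triangle-free constraint on the neighbourhood of v
  have HSTAR : ∀ j < 5, (NuD G ψ v v j).Nonempty →
      ((NuD G ψ v v ((j+1)%5)).card : ℝ) ≤ (4/10000) * (n:ℝ) ∧
      ((NuD G ψ v v ((j+4)%5)).card : ℝ) ≤ (4/10000) * (n:ℝ) := by
    intro j hj5 hne
    obtain ⟨u, hu⟩ := hne
    rw [mem_NuD] at hu
    obtain ⟨⟨hu1, hu2, hu3⟩, huE⟩ := hu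
    have hd := HD u hu1 hu2
    rw [hu3] at hd
    have key : ∀ k, (NuD G ψ v v k ⊆ VcD G ψ v k \ NuD G ψ v u k) := by
      intro k w hw
      rw [Finset.mem_sdiff]
      rw [mem_NuD] at hw
      refine ⟨mem_VcD.2 hw.1, ?_⟩
      rw [mem_NuD]
      rintro ⟨-, hwE⟩
      exact tri_free hfree huE hwE hw.2
    have hb : ∀ k, ((NuD G ψ v v k).card : ℝ) ≤
        ((VcD G ψ v k).card : ℝ) - ((NuD G ψ v u k).card : ℝ) := by
      intro k
      have h1 := Finset.card_le_card (key k)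
      rw [Finset.card_sdiff_of_subset NuD_subset] at h1
      have h2 : (NuD G ψ v u k).card ≤ (VcD G ψ v k).card := Finset.card_le_card NuD_subset
      have := (Nat.cast_le (α := ℝ)).2 h1
      rwa [Nat.cast_sub h2] at this
    constructor
    · have := hb ((j+1)%5)
      have hA := HA ((j+1)%5) (Nat.mod_lt _ (by norm_num))
      linarith [hd.1]
    · have := hb ((j+4)%5)
      have hA := HA ((j+4)%5) (Nat.mod_lt _ (by norm_num))
      linarith [hd.2]
  -- the off-diagonal sum at v is large
  have HS : (31/10000) * (n:ℝ)^2 ≤ ∑ p ∈ ODset,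
      ((NuD G ψ v v p.1).card : ℝ) * ((NuD G ψ v v p.2).card : ℝ) := by
    have hT := HT v hv
    have hC := countB3R G ψ v n hGn Hψlt Hψe
    by_contra hcon
    push_neg at hcon
    obtain ⟨SS, hSS⟩ : ∃ SS, SS = ∑ p ∈ ODset,
        ((NuD G ψ v v p.1).card : ℝ) * ((NuD G ψ v v p.2).card : ℝ) := ⟨_, rfl⟩
    rw [← hSS] at hC hcon
    obtain ⟨TT, hTT⟩ : ∃ TT, TT = ((T4 G v).card : ℝ) := ⟨_, rfl⟩
    rw [← hTT] at hC hT
    have h2pos : (0:ℝ) < (n:ℝ)^2 := by positivity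
    have hint1 := mul_lt_mul_of_pos_left hcon h2pos
    have h3 : (0:ℝ) ≤ (n:ℝ)^3 := by positivity
    have hint2 : (10:ℝ)^9 * (n:ℝ)^3 ≤ (n:ℝ) * (n:ℝ)^3 := mul_le_mul_of_nonneg_right hn' h3
    nlinarith [hT, hC, hint1, hint2]
  -- there are two big classes among the neighbours of v
  have Htwo : ∃ j, j < 5 ∧ ∃ j', j' < 5 ∧ j ≠ j' ∧
      (4/10000) * (n:ℝ) < ((NuD G ψ v v j).card : ℝ) ∧
      (4/10000) * (n:ℝ) < ((NuD G ψ v v j').card : ℝ) := by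
    by_contra hcon
    push_neg at hcon
    have hbound : ∀ p ∈ ODset, ((NuD G ψ v v p.1).card : ℝ) * ((NuD G ψ v v p.2).card : ℝ) ≤
        ((1 + 4/10000) * ((n:ℝ)/5)) * ((4/10000) * (n:ℝ)) := by
      intro p hp
      unfold ODset at hp
      simp only [Finset.mem_filter, Finset.mem_product, Finset.mem_range] at hp
      obtain ⟨⟨hp1, hp2⟩, hpne⟩ := hp
      have hba1 : ((NuD G ψ v v p.1).card : ℝ) ≤ (1 + 4/10000) * ((n:ℝ)/5) := by
        refine le_trans ?_ (HA p.1 hp1)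
        exact_mod_cast Finset.card_le_card NuD_subset
      have hba2 : ((NuD G ψ v v p.2).card : ℝ) ≤ (1 + 4/10000) * ((n:ℝ)/5) := by
        refine le_trans ?_ (HA p.2 hp2)
        exact_mod_cast Finset.card_le_card NuD_subset
      have hn1 : (0:ℝ) ≤ ((NuD G ψ v v p.1).card : ℝ) := by positivity
      have hn2 : (0:ℝ) ≤ ((NuD G ψ v v p.2).card : ℝ) := by positivity
      rcases le_or_gt ((NuD G ψ v v p.1).card : ℝ) ((4/10000) * (n:ℝ)) with h | h
      · nlinarith [hba2, h, hn1, hn2]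
      · have h2 := hcon p.1 hp1 p.2 hp2 hpne h
        nlinarith [hba1, h2, hn1, hn2]
    have hsum := Finset.sum_le_card_nsmul ODset _ _ hbound
    rw [ODset_card] at hsum
    rw [nsmul_eq_mul] at hsum
    obtain ⟨SS, hSS⟩ : ∃ SS, SS = ∑ p ∈ ODset,
        ((NuD G ψ v v p.1).card : ℝ) * ((NuD G ψ v v p.2).card : ℝ) := ⟨_, rfl⟩
    rw [← hSS] at hsum HS
    nlinarith [HS, hsum, mul_pos hnn0 hnn0]
  obtain ⟨j, hj5, j', hj'5, hjj, hbigj, hbigj'⟩ := Htwo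
  have hposd : (0:ℝ) < (4/10000) * (n:ℝ) := by linarith
  have hnej : (NuD G ψ v v j).Nonempty := by
    rw [← Finset.card_pos]
    by_contra h
    push_neg at h
    have : (NuD G ψ v v j).card = 0 := by omega
    rw [this] at hbigj
    norm_num at hbigj
    linarith
  have hnej' : (NuD G ψ v v j').Nonempty := by
    rw [← Finset.card_pos]
    by_contra h
    push_neg at h
    have : (NuD G ψ v v j').card = 0 := by omega
    rw [this] at hbigj'
    norm_num at hbigj'
    linarith
  have hstj := HSTAR j hj5 hnej
  have hstj' := HSTAR j' hj'5 hnej'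
  have hne1 : j' ≠ (j+1)%5 := by
    rintro rfl
    linarith [hstj.1]
  have hne2 : j' ≠ (j+4)%5 := by
    rintro rfl
    linarith [hstj.2]
  have hne3 : j ≠ (j'+1)%5 := by
    rintro rfl
    linarith [hstj'.1]
  have hne4 : j ≠ (j'+4)%5 := by
    rintro rfl
    linarith [hstj'.2]
  have hii : ∃ i, i < 5 ∧ (4/10000) * (n:ℝ) < ((NuD G ψ v v i).card : ℝ) ∧
      (4/10000) * (n:ℝ) < ((NuD G ψ v v ((i+2)%5)).card : ℝ) := by
    have hcases : j' = (j+2)%5 ∨ j' = (j+3)%5 := by omega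
    rcases hcases with h | h
    · exact ⟨j, hj5, hbigj, h ▸ hbigj'⟩
    · refine ⟨j', hj'5, hbigj', ?_⟩
      have heq : (j'+2)%5 = j := by omega
      rw [heq]
      exact hbigj
  obtain ⟨i, hi5, hbig1, hbig2⟩ := hii
  -- every neighbour of v is colored i or i+2
  have Hsupp : ∀ w, EE G v w → ψ w = i ∨ ψ w = (i+2)%5 := by
    intro w hw
    have hwv : w ≠ v := (hw.ne).symm
    have hwm : w ∈ G.verts := hw.mem_right
    have hm5 : ψ w < 5 := Hψlt w hwm hwv
    have hne : (NuD G ψ v v (ψ w)).Nonempty := ⟨w, mem_NuD.2 ⟨⟨hwm, hwv, rfl⟩, hw⟩⟩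
    have h1 := HSTAR (ψ w) hm5 hne
    have e1 : i ≠ (ψ w + 1)%5 := by
      intro heq
      rw [heq] at hbig1
      linarith [h1.1]
    have e2 : i ≠ (ψ w + 4)%5 := by
      intro heq
      rw [heq] at hbig1
      linarith [h1.2]
    have e3 : (i+2)%5 ≠ (ψ w + 1)%5 := by
      intro heq
      rw [heq] at hbig2
      linarith [h1.1]
    have e4 : (i+2)%5 ≠ (ψ w + 4)%5 := by
      intro heq
      rw [heq] at hbig2
      linarith [h1.2]
    omega
  -- construct the coloring of G
  refine ⟨fun x => if x = v then (i+1)%5 else ψ x, ?_, ?_, ?_⟩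
  · -- maps to
    intro x hx
    simp only [Finset.mem_coe] at hx
    by_cases hxv : x = v
    · simp only [hxv, if_pos rfl]
      simp [cycle5, Nat.mod_lt]
    · simp only [if_neg hxv]
      simp only [cycle5, Finset.coe_range, Set.mem_Iio]
      exact Hψlt x hx hxv
  · -- edges
    intro e he
    obtain ⟨a, b, hab, rfl⟩ := edge_pair he
    rw [image_pair']
    have hEab : EE G a b := he
    by_cases ha : a = v
    · have hbv : b ≠ v := by
        rw [← ha]; exact fun h => hab h.symm
      have hEvb : EE G v b := ha ▸ hEab
      have hsup := Hsupp b hEvb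
      simp only [if_pos ha, if_neg hbv]
      have hlt1 : (i+1)%5 < 5 := Nat.mod_lt _ (by norm_num)
      rcases hsup with hc | hc
      · rw [hc]
        exact (cyc_adj_iff _ hlt1 _ hi5).2 (Or.inr rfl)
      · rw [hc]
        refine (cyc_adj_iff _ hlt1 _ (Nat.mod_lt _ (by norm_num))).2 (Or.inl ?_)
        omega
    · by_cases hb : b = v
      · have hEva : EE G v a := hb ▸ hEab.symm
        have hsup := Hsupp a hEva
        simp only [if_neg ha, if_pos hb]
        have hlt1 : (i+1)%5 < 5 := Nat.mod_lt _ (by norm_num)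
        rw [Finset.pair_comm]
        rcases hsup with hc | hc
        · rw [hc]
          exact (cyc_adj_iff _ hlt1 _ hi5).2 (Or.inr rfl)
        · rw [hc]
          refine (cyc_adj_iff _ hlt1 _ (Nat.mod_lt _ (by norm_num))).2 (Or.inl ?_)
          omega
      · simp only [if_neg ha, if_neg hb]
        exact Hψe a b hEab ha hb
  · -- identity outside
    intro x hx
    have hxv : x ≠ v := fun h => hx (h ▸ hv)
    simp only [if_neg hxv]
    apply hid
    rw [hdelv, Finset.mem_sdiff]
    rintro ⟨hx1, -⟩
    exact hx hx1

end
end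

section
/- Let r ≥ 2 be an integer, Q an r-graph with no isolated vertices, and F an edge-critical graph with χ(F) = ℓ + 1. Suppose that π_inj(Q, H_F^r) > 0 and that H_F^r is Q-degree-stable with respect to the family of ℓ-partite r-graphs. Then for all sufficiently large n, inj(n, Q, H_F^r) = max{inj(Q, H) : H is an ℓ-partite r-graph on n vertices}. -/
open Finset

attribute [local instance 10] Classical.propDecidable

noncomputable section

/-! ## Auxiliary lemmas for the proof of Statement 12 -/

section Aux12

variable {r : ℕ}

/-- all maps extending a function `Q.verts → H.verts` by the identity -/
def allMaps (Q H : RGraph r) : Finset (ℕ → ℕ) :=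
  (Q.verts.pi fun _ => H.verts).image fun f x => if h : x ∈ Q.verts then f x h else x

lemma injHoms_subset_allMaps (Q H : RGraph r) : injHoms Q H ⊆ ↑(allMaps Q H) := by
  rintro φ ⟨-, hmap, -, hid⟩
  refine Finset.mem_coe.2 (Finset.mem_image.2 ⟨fun x _ => φ x, ?_, ?_⟩)
  · exact Finset.mem_pi.2 fun a ha => hmap ha
  · funext x
    by_cases hx : x ∈ Q.verts
    · simp [hx]
    · simp [hx, hid x hx]

lemma injHoms_finite (Q H : RGraph r) : (injHoms Q H).Finite :=
  Set.Finite.subset (allMaps Q H).finite_toSet (injHoms_subset_allMaps Q H)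

/-- the injective homomorphisms as a `Finset` -/
def injFinset (Q H : RGraph r) : Finset (ℕ → ℕ) :=
  (allMaps Q H).filter fun φ => φ ∈ injHoms Q H

lemma coe_injFinset (Q H : RGraph r) : ↑(injFinset Q H) = injHoms Q H := by
  ext φ
  simp only [injFinset, Finset.coe_filter, Set.mem_setOf_eq]
  exact ⟨fun h => h.2, fun h => ⟨Finset.mem_coe.1 (injHoms_subset_allMaps Q H h), h⟩⟩

lemma mem_injFinset {Q H : RGraph r} {φ : ℕ → ℕ} :
    φ ∈ injFinset Q H ↔ φ ∈ injHoms Q H := by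
  rw [← Finset.mem_coe, coe_injFinset]

lemma injc_eq_card (Q H : RGraph r) : injc Q H = (injFinset Q H).card := by
  rw [injc, ← coe_injFinset, Set.ncard_coe_finset]

lemma qdeg_eq_card (Q H : RGraph r) (v : ℕ) :
    qdeg Q H v = ((injFinset Q H).filter fun φ => ∃ x ∈ Q.verts, φ x = v).card := by
  rw [qdeg, ← Set.ncard_coe_finset]
  congr 1
  ext φ
  constructor
  · rintro ⟨h1, h2⟩
    exact Finset.mem_coe.2 (Finset.mem_filter.2 ⟨mem_injFinset.2 h1, h2⟩)
  · intro h
    obtain ⟨h1, h2⟩ := Finset.mem_filter.1 (Finset.mem_coe.1 h)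
    exact ⟨mem_injFinset.1 h1, h2⟩

lemma injc_le (Q H : RGraph r) : injc Q H ≤ H.nv ^ Q.nv := by
  rw [injc_eq_card]
  calc (injFinset Q H).card ≤ (allMaps Q H).card :=
        Finset.card_le_card (Finset.filter_subset _ _)
    _ ≤ (Q.verts.pi fun _ => H.verts).card := Finset.card_image_le
    _ = H.nv ^ Q.nv := by rw [Finset.card_pi, Finset.prod_const]; rfl

lemma sum_qdeg (Q H : RGraph r) :
    ∑ v ∈ H.verts, qdeg Q H v = Q.nv * injc Q H := by
  have key : ∀ φ ∈ injFinset Q H,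
      (H.verts.filter fun v => ∃ x ∈ Q.verts, φ x = v) = Q.verts.image φ := by
    intro φ hφ
    obtain ⟨hinj, hmap, -, -⟩ := mem_injFinset.1 hφ
    ext v
    simp only [Finset.mem_filter, Finset.mem_image]
    constructor
    · rintro ⟨-, x, hx, rfl⟩; exact ⟨x, hx, rfl⟩
    · rintro ⟨x, hx, rfl⟩; exact ⟨hmap hx, x, hx, rfl⟩
  calc ∑ v ∈ H.verts, qdeg Q H v
      = ∑ v ∈ H.verts, ∑ φ ∈ injFinset Q H,
          if ∃ x ∈ Q.verts, φ x = v then 1 else 0 := by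
        simp_rw [qdeg_eq_card, Finset.card_filter]
    _ = ∑ φ ∈ injFinset Q H, ∑ v ∈ H.verts,
          if ∃ x ∈ Q.verts, φ x = v then 1 else 0 := Finset.sum_comm
    _ = ∑ φ ∈ injFinset Q H,
          (H.verts.filter fun v => ∃ x ∈ Q.verts, φ x = v).card := by
        simp_rw [Finset.card_filter]
    _ = ∑ φ ∈ injFinset Q H, Q.nv := by
        refine Finset.sum_congr rfl fun φ hφ => ?_
        rw [key φ hφ, Finset.card_image_of_injOn (mem_injFinset.1 hφ).1]; rfl
    _ = Q.nv * injc Q H := by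
        rw [Finset.sum_const, smul_eq_mul, injc_eq_card, mul_comm]

lemma exists_qdeg_le (Q H : RGraph r) (hne : H.verts.Nonempty) :
    ∃ v ∈ H.verts, H.verts.card * qdeg Q H v ≤ Q.nv * injc Q H := by
  by_contra h
  push_neg at h
  have h2 := Finset.sum_lt_sum_of_nonempty hne
    (f := fun _ => Q.nv * injc Q H) (g := fun v => H.verts.card * qdeg Q H v)
    fun v hv => h v hv
  rw [Finset.sum_const, smul_eq_mul, ← Finset.mul_sum, sum_qdeg] at h2
  exact lt_irrefl _ h2

lemma exists_qdeg_ge (Q H : RGraph r) (hne : H.verts.Nonempty) :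
    ∃ v ∈ H.verts, Q.nv * injc Q H ≤ H.verts.card * qdeg Q H v := by
  by_contra h
  push_neg at h
  have h2 := Finset.sum_lt_sum_of_nonempty hne
    (f := fun v => H.verts.card * qdeg Q H v) (g := fun _ => Q.nv * injc Q H)
    fun v hv => h v hv
  rw [Finset.sum_const, smul_eq_mul, ← Finset.mul_sum, sum_qdeg] at h2
  exact lt_irrefl _ h2

lemma deleteVert_nv {H : RGraph r} {v : ℕ} (hv : v ∈ H.verts) :
    (H.deleteVert v).nv = H.nv - 1 := by
  show (H.verts \ {v}).card = H.verts.card - 1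
  rw [Finset.card_sdiff_of_subset (Finset.singleton_subset_iff.2 hv), Finset.card_singleton]

lemma injHoms_mono {Q H' H : RGraph r} (h : H'.IsSubgraph H) :
    injHoms Q H' ⊆ injHoms Q H := by
  rintro φ ⟨h1, h2, h3, h4⟩
  exact ⟨h1, h2.mono_right (Finset.coe_subset.2 h.1), fun e he => h.2 (h3 e he), h4⟩

lemma expansionFree_mono {F : RGraph 2} {H' H : RGraph r} (hH : ExpansionFree r F H)
    (h : H'.IsSubgraph H) : ExpansionFree r F H' := by
  intro E hE
  have h0 := hH E hE
  rw [FreeOf] at h0 ⊢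
  exact Set.subset_empty_iff.1 (h0 ▸ injHoms_mono h)

lemma deleteVert_isSubgraph (H : RGraph r) (v : ℕ) : (H.deleteVert v).IsSubgraph H :=
  ⟨Finset.sdiff_subset, Finset.filter_subset _ _⟩

lemma injc_le_qdeg_add (Q H : RGraph r) (v : ℕ) :
    injc Q H ≤ qdeg Q H v + injc Q (H.deleteVert v) := by
  have hsub : ↑((injFinset Q H).filter fun φ => ¬∃ x ∈ Q.verts, φ x = v)
      ⊆ injHoms Q (H.deleteVert v) := by
    intro φ hφ
    obtain ⟨hmem, hnot⟩ := Finset.mem_filter.1 (Finset.mem_coe.1 hφ)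
    obtain ⟨h1, h2, h3, h4⟩ := mem_injFinset.1 hmem
    refine ⟨h1, ?_, ?_, h4⟩
    · intro x hx
      have hxv : φ x ∈ H.verts := h2 hx
      have hne : φ x ≠ v := fun hc => hnot ⟨x, hx, hc⟩
      show φ x ∈ ↑(H.verts \ {v})
      exact Finset.mem_coe.2 (Finset.mem_sdiff.2 ⟨hxv, by simpa using hne⟩)
    · intro e he
      refine Finset.mem_filter.2 ⟨h3 e he, ?_⟩
      intro w hw hwe
      rw [Finset.mem_singleton] at hw
      subst hw
      obtain ⟨x, hxe, hxv⟩ := Finset.mem_image.1 hwe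
      exact hnot ⟨x, Q.edge_sub e he hxe, hxv⟩
  have hle : ((injFinset Q H).filter fun φ => ¬∃ x ∈ Q.verts, φ x = v).card
      ≤ injc Q (H.deleteVert v) := by
    rw [injc, ← Set.ncard_coe_finset]
    exact Set.ncard_le_ncard hsub (injHoms_finite _ _)
  have hsplit : ((injFinset Q H).filter fun φ => ∃ x ∈ Q.verts, φ x = v).card
      + ((injFinset Q H).filter fun φ => ¬∃ x ∈ Q.verts, φ x = v).card
      = (injFinset Q H).card :=
    Finset.card_filter_add_card_filter_not _
  calc injc Q H = (injFinset Q H).card := injc_eq_card Q H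
    _ = ((injFinset Q H).filter fun φ => ∃ x ∈ Q.verts, φ x = v).card
        + ((injFinset Q H).filter fun φ => ¬∃ x ∈ Q.verts, φ x = v).card := hsplit.symm
    _ ≤ qdeg Q H v + injc Q (H.deleteVert v) := by
        rw [qdeg_eq_card]
        exact Nat.add_le_add le_rfl hle

/-- the edgeless `r`-graph on `n` vertices -/
def edgeless (r n : ℕ) : RGraph r where
  verts := Finset.range n
  edges := ∅
  edge_card := by simp
  edge_sub := by simp

lemma edgeless_nv (r n : ℕ) : (edgeless r n).nv = n := by
  simp [edgeless, RGraph.nv]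

lemma edgeless_free {F : RGraph 2} (hF : F.edges.Nonempty) (n : ℕ) :
    ExpansionFree r F (edgeless r n) := by
  rintro E ⟨f, -, -, -, hEe⟩
  rw [FreeOf, Set.eq_empty_iff_forall_notMem]
  rintro φ ⟨-, -, h3, -⟩
  obtain ⟨e, he⟩ := hF
  have hmem : (e ∪ f e) ∈ E.edges := hEe ▸ Finset.mem_image_of_mem _ he
  have := h3 _ hmem
  simp [edgeless] at this

lemma edgeless_partite (n ℓ : ℕ) (hl : 1 ≤ ℓ) : IsPartite (edgeless r n) ℓ :=
  ⟨fun _ => 0, fun _ _ => hl, by simp [edgeless]⟩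

lemma chrNum_mem {F : RGraph 2} {m : ℕ} (h : chrNum F = m) (hne : m ≠ 0) :
    IsPartite F m := by
  have hset : {k | IsPartite F k}.Nonempty := by
    by_contra hemp
    rw [Set.not_nonempty_iff_eq_empty] at hemp
    rw [chrNum, hemp, Nat.sInf_empty] at h
    exact hne h.symm
  have hmem := Nat.sInf_mem hset
  rw [chrNum] at h
  rwa [h] at hmem

lemma ellPos {F : RGraph 2} {ℓ : ℕ} (hFc : EdgeCritical F) (hχF : chrNum F = ℓ + 1) :
    1 ≤ ℓ := by
  by_contra h
  push_neg at h
  interval_cases ℓ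
  obtain ⟨c, hc1, hc2⟩ := chrNum_mem hχF one_ne_zero
  obtain ⟨e, he, -⟩ := hFc
  have hcard : 1 < e.card := by rw [F.edge_card e he]; omega
  obtain ⟨a, ha, b, hb, hab⟩ := Finset.one_lt_card.1 hcard
  have hca : c a = 0 := by have := hc1 a (F.edge_sub e he ha); omega
  have hcb : c b = 0 := by have := hc1 b (F.edge_sub e he hb); omega
  exact hab (hc2 e he a ha b hb (hca.trans hcb.symm))

lemma partite_expansionFree {F : RGraph 2} {ℓ : ℕ} (hχF : chrNum F = ℓ + 1)
    {H : RGraph r} (hp : IsPartite H ℓ) : ExpansionFree r F H := by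
  rintro E ⟨f, -, -, hEv, hEe⟩
  rw [FreeOf, Set.eq_empty_iff_forall_notMem]
  rintro φ ⟨hinj, hmap, hedge, -⟩
  obtain ⟨c, hc1, hc2⟩ := hp
  have hFsub : ∀ a ∈ F.verts, a ∈ E.verts := by
    intro a ha
    rw [hEv]
    exact Finset.mem_union_left _ ha
  have hpart : IsPartite F ℓ := by
    refine ⟨fun v => c (φ v), fun v hv => hc1 _ (hmap (hFsub v hv)), ?_⟩
    intro e he a ha b hb hab
    have heE : e ∪ f e ∈ E.edges := hEe ▸ Finset.mem_image_of_mem _ he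
    have himg : (e ∪ f e).image φ ∈ H.edges := hedge _ heE
    have haE : φ a ∈ (e ∪ f e).image φ :=
      Finset.mem_image_of_mem _ (Finset.mem_union_left _ ha)
    have hbE : φ b ∈ (e ∪ f e).image φ :=
      Finset.mem_image_of_mem _ (Finset.mem_union_left _ hb)
    have heq := hc2 _ himg _ haE _ hbE hab
    exact hinj (Finset.mem_coe.2 (hFsub a (F.edge_sub e he ha)))
      (Finset.mem_coe.2 (hFsub b (F.edge_sub e he hb))) heq
  have hle : chrNum F ≤ ℓ := Nat.sInf_le hpart
  omega

/-- a fresh vertex not in `H` -/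
def fresh (H : RGraph r) : ℕ := H.verts.sup id + 1

lemma fresh_not_mem (H : RGraph r) : fresh H ∉ H.verts := by
  intro h
  have h2 : id (fresh H) ≤ H.verts.sup id := Finset.le_sup h
  simp only [id_eq, fresh] at h2
  omega

/-- duplicate the vertex `u` of `H` -/
def clone (H : RGraph r) (u : ℕ) : RGraph r where
  verts := insert (fresh H) H.verts
  edges := H.edges ∪ (H.edges.filter fun e => u ∈ e).image fun e =>
    insert (fresh H) (e.erase u)
  edge_card := by
    intro e he
    rcases Finset.mem_union.1 he with he | he
    · exact H.edge_card e he
    · obtain ⟨e', he', rfl⟩ := Finset.mem_image.1 he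
      obtain ⟨he'H, hu⟩ := Finset.mem_filter.1 he'
      have hw : fresh H ∉ e'.erase u := fun h =>
        fresh_not_mem H (H.edge_sub e' he'H (Finset.mem_of_mem_erase h))
      have hrc := H.edge_card e' he'H
      have hr0 : 0 < r := hrc ▸ Finset.card_pos.2 ⟨u, hu⟩
      rw [Finset.card_insert_of_notMem hw, Finset.card_erase_of_mem hu, hrc]
      omega
  edge_sub := by
    intro e he x hx
    rcases Finset.mem_union.1 he with he | he
    · exact Finset.mem_insert_of_mem (H.edge_sub e he hx)
    · obtain ⟨e', he', rfl⟩ := Finset.mem_image.1 he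
      rcases Finset.mem_insert.1 hx with rfl | hx
      · exact Finset.mem_insert_self _ _
      · exact Finset.mem_insert_of_mem
          (H.edge_sub e' (Finset.mem_filter.1 he').1 (Finset.mem_of_mem_erase hx))

lemma clone_nv (H : RGraph r) (u : ℕ) : (clone H u).nv = H.nv + 1 := by
  show (insert (fresh H) H.verts).card = H.verts.card + 1
  rw [Finset.card_insert_of_notMem (fresh_not_mem H)]

lemma clone_partite {H : RGraph r} {ℓ : ℕ} (hp : IsPartite H ℓ) {u : ℕ}
    (hu : u ∈ H.verts) : IsPartite (clone H u) ℓ := by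
  obtain ⟨c, hc1, hc2⟩ := hp
  refine ⟨fun v => if v = fresh H then c u else c v, ?_, ?_⟩
  · intro v hv
    rcases Finset.mem_insert.1 hv with rfl | hv
    · simp [hc1 u hu]
    · have hvw : v ≠ fresh H := fun h => fresh_not_mem H (h ▸ hv)
      simpa [hvw] using hc1 v hv
  · intro e he a ha b hb hab
    rcases Finset.mem_union.1 he with he | he
    · have haw : a ≠ fresh H := fun h => fresh_not_mem H (h ▸ H.edge_sub e he ha)
      have hbw : b ≠ fresh H := fun h => fresh_not_mem H (h ▸ H.edge_sub e he hb)
      simp only [haw, hbw, if_false] at hab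
      exact hc2 e he a ha b hb hab
    · obtain ⟨e', he', rfl⟩ := Finset.mem_image.1 he
      obtain ⟨he'H, hue'⟩ := Finset.mem_filter.1 he'
      rcases Finset.mem_insert.1 ha with rfl | ha' <;>
        rcases Finset.mem_insert.1 hb with hb' | hb'
      · exact hb'.symm
      · exfalso
        have hbH : b ∈ H.verts := H.edge_sub e' he'H (Finset.mem_of_mem_erase hb')
        have hbw : b ≠ fresh H := fun h => fresh_not_mem H (h ▸ hbH)
        simp only [hbw, if_false, if_pos] at hab
        exact (Finset.ne_of_mem_erase hb')
          (hc2 e' he'H u hue' b (Finset.mem_of_mem_erase hb') hab).symm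
      · exfalso
        subst hb'
        have haH : a ∈ H.verts := H.edge_sub e' he'H (Finset.mem_of_mem_erase ha')
        have haw : a ≠ fresh H := fun h => fresh_not_mem H (h ▸ haH)
        simp only [haw, if_false, if_pos] at hab
        exact (Finset.ne_of_mem_erase ha')
          (hc2 e' he'H a (Finset.mem_of_mem_erase ha') u hue' hab)
      · have haH : a ∈ H.verts := H.edge_sub e' he'H (Finset.mem_of_mem_erase ha')
        have hbH : b ∈ H.verts := H.edge_sub e' he'H (Finset.mem_of_mem_erase hb')
        have haw : a ≠ fresh H := fun h => fresh_not_mem H (h ▸ haH)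
        have hbw : b ≠ fresh H := fun h => fresh_not_mem H (h ▸ hbH)
        simp only [haw, hbw, if_false] at hab
        exact hc2 e' he'H a (Finset.mem_of_mem_erase ha') b
          (Finset.mem_of_mem_erase hb') hab

lemma injc_clone (Q H : RGraph r) {u : ℕ} (hu : u ∈ H.verts) :
    injc Q H + qdeg Q H u ≤ injc Q (clone H u) := by
  set w := fresh H with hwdef
  have hwH : w ∉ H.verts := fresh_not_mem H
  set ι : (ℕ → ℕ) → (ℕ → ℕ) :=
    fun φ x => if x ∈ Q.verts ∧ φ x = u then w else φ x with hι
  set D : Set (ℕ → ℕ) := {φ ∈ injHoms Q H | ∃ x ∈ Q.verts, φ x = u} with hD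
  have hDsub : D ⊆ injHoms Q H := fun φ hφ => hφ.1
  have hDfin : D.Finite := (injHoms_finite Q H).subset hDsub
  have hsubA : injHoms Q H ⊆ injHoms Q (clone H u) :=
    injHoms_mono ⟨Finset.subset_insert _ _, Finset.subset_union_left⟩
  have hB : ∀ φ ∈ D, ι φ ∈ injHoms Q (clone H u) := by
    rintro φ ⟨⟨hinj, hmap, hedge, hid⟩, -⟩
    refine ⟨?_, ?_, ?_, ?_⟩
    · -- injective on Q.verts
      intro x hx y hy hxy
      simp only [hι] at hxy
      by_cases hxu : x ∈ Q.verts ∧ φ x = u <;> by_cases hyu : y ∈ Q.verts ∧ φ y = u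
      · exact hinj hx hy (by rw [hxu.2, hyu.2])
      · rw [if_pos hxu, if_neg hyu] at hxy
        exact absurd (Finset.mem_coe.1 (hxy ▸ hmap hy)) hwH
      · rw [if_neg hxu, if_pos hyu] at hxy
        exact absurd (Finset.mem_coe.1 (hxy ▸ hmap hx)) hwH
      · rw [if_neg hxu, if_neg hyu] at hxy
        exact hinj hx hy hxy
    · -- maps into verts
      intro x hx
      simp only [hι]
      by_cases hxu : x ∈ Q.verts ∧ φ x = u
      · rw [if_pos hxu]
        exact Finset.mem_coe.2 (Finset.mem_insert_self _ _)
      · rw [if_neg hxu]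
        exact Finset.mem_coe.2 (Finset.mem_insert_of_mem (hmap hx))
    · -- edges
      intro e he
      have hsubQ : ∀ x ∈ e, x ∈ Q.verts := fun x hx => Q.edge_sub e he hx
      by_cases huim : u ∈ e.image φ
      · have himg : e.image (ι φ) = insert w ((e.image φ).erase u) := by
          ext z
          constructor
          · intro hz
            obtain ⟨x, hx, rfl⟩ := Finset.mem_image.1 hz
            by_cases hxu : φ x = u
            · have : ι φ x = w := by simp [hι, hsubQ x hx, hxu]
              rw [this]
              exact Finset.mem_insert_self _ _
            · have : ι φ x = φ x := by simp [hι, hxu]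
              rw [this]
              exact Finset.mem_insert_of_mem
                (Finset.mem_erase.2 ⟨hxu, Finset.mem_image_of_mem _ hx⟩)
          · intro hz
            rcases Finset.mem_insert.1 hz with rfl | hz
            · obtain ⟨x, hx, hxu⟩ := Finset.mem_image.1 huim
              refine Finset.mem_image.2 ⟨x, hx, ?_⟩
              simp [hι, hsubQ x hx, hxu]
            · obtain ⟨hzu, hzim⟩ := Finset.mem_erase.1 hz
              obtain ⟨x, hx, rfl⟩ := Finset.mem_image.1 hzim
              refine Finset.mem_image.2 ⟨x, hx, ?_⟩
              simp [hι, hzu]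
        rw [himg]
        refine Finset.mem_union_right _ (Finset.mem_image_of_mem _ ?_)
        exact Finset.mem_filter.2 ⟨hedge e he, huim⟩
      · have himg : e.image (ι φ) = e.image φ := by
          refine Finset.image_congr fun x hx => ?_
          have hxu : ¬(φ x = u) := fun h => huim (h ▸ Finset.mem_image_of_mem _ hx)
          simp [hι, hxu]
        rw [himg]
        exact Finset.mem_union_left _ (hedge e he)
    · -- identity outside
      intro x hx
      simp only [hι, hx, false_and, if_false]
      exact hid x hx
  have hdisj : Disjoint (injHoms Q H) (ι '' D) := by
    rw [Set.disjoint_left]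
    rintro φ hφ ⟨φ', ⟨-, x₀, hx₀, hx₀u⟩, rfl⟩
    have heq : ι φ' x₀ = w := by simp [hι, hx₀, hx₀u]
    have hmem : ι φ' x₀ ∈ ↑H.verts := hφ.2.1 hx₀
    rw [heq] at hmem
    exact hwH (Finset.mem_coe.1 hmem)
  have hinjOn : Set.InjOn ι D := by
    rintro φ₁ ⟨⟨-, hmap₁, -, hid₁⟩, -⟩ φ₂ ⟨⟨-, hmap₂, -, hid₂⟩, -⟩ h
    funext x
    by_cases hx : x ∈ Q.verts
    · have hx' := congrFun h x
      simp only [hι] at hx'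
      by_cases h1 : x ∈ Q.verts ∧ φ₁ x = u <;> by_cases h2 : x ∈ Q.verts ∧ φ₂ x = u
      · rw [h1.2, h2.2]
      · rw [if_pos h1, if_neg h2] at hx'
        exact absurd (Finset.mem_coe.1 (hx' ▸ hmap₂ hx)) hwH
      · rw [if_neg h1, if_pos h2] at hx'
        exact absurd (Finset.mem_coe.1 (hx'.symm ▸ hmap₁ hx)) hwH
      · rwa [if_neg h1, if_neg h2] at hx'
    · rw [hid₁ x hx, hid₂ x hx]
  have hBsub : ι '' D ⊆ injHoms Q (clone H u) := by
    rintro ψ ⟨φ, hφ, rfl⟩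
    exact hB φ hφ
  have h1 : (injHoms Q H ∪ ι '' D).ncard ≤ injc Q (clone H u) :=
    Set.ncard_le_ncard (Set.union_subset hsubA hBsub) (injHoms_finite _ _)
  have h2 : (injHoms Q H ∪ ι '' D).ncard
      = (injHoms Q H).ncard + (ι '' D).ncard :=
    Set.ncard_union_eq hdisj (injHoms_finite _ _) (hDfin.image _)
  have h3 : (ι '' D).ncard = D.ncard := Set.ncard_image_of_injOn hinjOn
  have h4 : qdeg Q H u = D.ncard := rfl
  rw [injc, h4]
  omega

/-- pad `H` with `k` isolated vertices -/
def pad (H : RGraph r) (k : ℕ) : RGraph r where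
  verts := H.verts ∪ (Finset.range k).image fun i => i + fresh H
  edges := H.edges
  edge_card := H.edge_card
  edge_sub := fun e he => (H.edge_sub e he).trans Finset.subset_union_left

lemma pad_nv (H : RGraph r) (k : ℕ) : (pad H k).nv = H.nv + k := by
  have hdisj : Disjoint H.verts ((Finset.range k).image fun i => i + fresh H) := by
    rw [Finset.disjoint_right]
    intro a ha hmem
    obtain ⟨i, -, rfl⟩ := Finset.mem_image.1 ha
    have h2 : id (i + fresh H) ≤ H.verts.sup id := Finset.le_sup hmem
    simp only [id_eq, fresh] at h2
    omega
  show (H.verts ∪ _).card = H.verts.card + k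
  rw [Finset.card_union_of_disjoint hdisj,
    Finset.card_image_of_injective _ (add_left_injective _), Finset.card_range]

lemma injHoms_pad (Q H : RGraph r) (hiso : NoIsolated Q) (k : ℕ) :
    injHoms Q (pad H k) = injHoms Q H := by
  apply Set.Subset.antisymm
  · rintro φ ⟨h1, h2, h3, h4⟩
    refine ⟨h1, ?_, h3, h4⟩
    intro x hx
    obtain ⟨e, he, hxe⟩ := hiso x (Finset.mem_coe.1 hx)
    exact Finset.mem_coe.2 (H.edge_sub _ (h3 e he) (Finset.mem_image_of_mem φ hxe))
  · rintro φ ⟨h1, h2, h3, h4⟩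
    refine ⟨h1, h2.mono_right ?_, h3, h4⟩
    exact_mod_cast (Finset.subset_union_left :
      H.verts ⊆ H.verts ∪ (Finset.range k).image fun i => i + fresh H)

lemma pad_partite {H : RGraph r} {ℓ : ℕ} (hl : 1 ≤ ℓ) (hp : IsPartite H ℓ) (k : ℕ) :
    IsPartite (pad H k) ℓ := by
  obtain ⟨c, hc1, hc2⟩ := hp
  refine ⟨fun v => if v ∈ H.verts then c v else 0, fun v _ => ?_, ?_⟩
  · by_cases h : v ∈ H.verts
    · simpa [h] using hc1 v h
    · simp [h]; omega
  · intro e he a ha b hb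
    have haH := H.edge_sub e he ha
    have hbH := H.edge_sub e he hb
    simp only [haH, hbH, if_true]
    exact hc2 e he a ha b hb

/-- the key elementary inequality for the progressive induction -/
lemma arith_main (k : ℕ) (N K ε pp a a' b b' : ℝ)
    (hK : K = (k : ℝ)) (hK1 : 1 ≤ K) (hN2 : K + 1 ≤ N)
    (hε0 : 0 < ε) (hε1 : ε ≤ 1) (hpi : 0 < pp)
    (hen : 2 * K ≤ ε * N)
    (ha' : pp / 2 * N ^ k ≤ a')
    (hb0 : 0 ≤ b') (hΦ : b' ≤ a')
    (hA : a ≤ a' + (1 - ε) * K * a / (N + 1))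
    (hB : (N + K) * b' ≤ N * b)
    (hC : (N + 1 - K) * a ≤ (N + 1) * a') :
    (a - b) / (N + 1) ^ k ≤ (a' - b') / N ^ k
      - ε * K * pp / 2 ^ (k + 2) / (N + 1) := by
  have hN0 : 0 < N := by linarith
  have hM0 : 0 < N + 1 := by linarith
  have hMK : 0 < N + 1 - K := by linarith
  have hNk : 0 < N ^ k := pow_pos hN0 k
  have hMk : 0 < (N + 1) ^ k := pow_pos hM0 k
  have ha'0 : 0 < a' := lt_of_lt_of_le (by positivity) ha'
  have hdiv : a / (N + 1) ≤ a' / (N + 1 - K) :=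
    (div_le_div_iff₀ hM0 hMK).2 (by nlinarith [hC])
  have s1 : (1 - ε) * K * a / (N + 1) ≤ (1 - ε) * K * (a' / (N + 1 - K)) := by
    calc (1 - ε) * K * a / (N + 1) = (1 - ε) * K * (a / (N + 1)) := by ring
      _ ≤ (1 - ε) * K * (a' / (N + 1 - K)) := by
          apply mul_le_mul_of_nonneg_left hdiv
          nlinarith
  have s2 : b' + K * b' / N ≤ b := by
    rw [← mul_le_mul_iff_right₀ hN0]
    have heq : N * (b' + K * b' / N) = (N + K) * b' := by field_simp
    rw [heq]
    exact hB
  have hA2 : a ≤ a' + (1 - ε) * K * (a' / (N + 1 - K)) := by linarith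
  have hexp : a' + (1 - ε) * K * (a' / (N + 1 - K)) - (b' + K * b' / N)
      = (a' - b') * (1 + K / N) + K * a' * ((1 - ε) / (N + 1 - K) - 1 / N) := by
    field_simp
    ring
  have s3 : a - b ≤ (a' - b') * (1 + K / N)
      + K * a' * ((1 - ε) / (N + 1 - K) - 1 / N) := by linarith
  have e1 : (1 - ε) / (N + 1 - K) - 1 / N = (K - 1 - ε * N) / ((N + 1 - K) * N) := by
    field_simp
    ring
  have e2 : (K - 1 - ε * N) / ((N + 1 - K) * N)
      ≤ (-(ε * N / 2)) / ((N + 1 - K) * N) := by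
    gcongr
    linarith
  have e3 : (-(ε * N / 2)) / ((N + 1 - K) * N) ≤ -(ε / (2 * (N + 1))) := by
    rw [neg_div, neg_le_neg_iff]
    rw [div_le_div_iff₀ (by positivity) (by positivity)]
    nlinarith
  have s4 : (1 - ε) / (N + 1 - K) - 1 / N ≤ -(ε / (2 * (N + 1))) :=
    e1 ▸ (e2.trans e3)
  have hKa' : (0 : ℝ) ≤ K * a' := by positivity
  have s4' := mul_le_mul_of_nonneg_left s4 hKa'
  have s5 : a - b ≤ (a' - b') * (1 + K / N) - K * a' * (ε / (2 * (N + 1))) := by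
    have hrw : K * a' * (-(ε / (2 * (N + 1)))) = -(K * a' * (ε / (2 * (N + 1)))) := by
      ring
    rw [hrw] at s4'
    linarith
  have hber : (1 + K / N) * N ^ k ≤ (N + 1) ^ k := by
    have h1 : 1 + K * (1 / N) ≤ (1 + 1 / N) ^ k := by
      rw [hK]
      have h0 : (0 : ℝ) ≤ 1 / N := by positivity
      exact one_add_mul_le_pow (by linarith) k
    have h2 : (1 + 1 / N) ^ k * N ^ k = (N + 1) ^ k := by
      rw [← mul_pow]
      congr 1
      field_simp
    calc (1 + K / N) * N ^ k = (1 + K * (1 / N)) * N ^ k := by ring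
      _ ≤ (1 + 1 / N) ^ k * N ^ k := mul_le_mul_of_nonneg_right h1 hNk.le
      _ = (N + 1) ^ k := h2
  have s7 : (a' - b') * (1 + K / N) / (N + 1) ^ k ≤ (a' - b') / N ^ k := by
    rw [div_le_div_iff₀ hMk hNk]
    calc (a' - b') * (1 + K / N) * N ^ k = (a' - b') * ((1 + K / N) * N ^ k) := by
          ring
      _ ≤ (a' - b') * (N + 1) ^ k := mul_le_mul_of_nonneg_left hber (by linarith)
  have s8 : ε * K * pp / 2 ^ (k + 2) / (N + 1)
      ≤ K * a' * (ε / (2 * (N + 1))) / (N + 1) ^ k := by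
    have hpow : (N + 1) ^ k ≤ 2 ^ k * N ^ k := by
      calc (N + 1) ^ k ≤ (2 * N) ^ k := by
            apply pow_le_pow_left₀ (by linarith) (by linarith)
        _ = 2 ^ k * N ^ k := mul_pow 2 N k
    have ha'2 : pp * (N + 1) ^ k / 2 ^ (k + 1) ≤ a' := by
      rw [div_le_iff₀ (by positivity)]
      calc pp * (N + 1) ^ k ≤ pp * (2 ^ k * N ^ k) :=
            mul_le_mul_of_nonneg_left hpow hpi.le
        _ = pp / 2 * N ^ k * 2 ^ (k + 1) := by rw [pow_succ]; ring
        _ ≤ a' * 2 ^ (k + 1) := by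
            apply mul_le_mul_of_nonneg_right ha' (by positivity)
    rw [div_le_div_iff₀ (by positivity) hMk]
    have hr : K * a' * (ε / (2 * (N + 1))) * (N + 1) = K * a' * ε / 2 := by
      field_simp
    rw [hr]
    have hmul := mul_le_mul_of_nonneg_left ha'2 (show (0 : ℝ) ≤ K * ε / 2 by positivity)
    calc ε * K * pp / 2 ^ (k + 2) * (N + 1) ^ k
        = K * ε / 2 * (pp * (N + 1) ^ k / 2 ^ (k + 1)) := by
          rw [pow_succ]
          ring
      _ ≤ K * ε / 2 * a' := hmul
      _ = K * a' * ε / 2 := by ring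
  calc (a - b) / (N + 1) ^ k
      ≤ ((a' - b') * (1 + K / N) - K * a' * (ε / (2 * (N + 1)))) / (N + 1) ^ k := by
        gcongr
    _ = (a' - b') * (1 + K / N) / (N + 1) ^ k
        - K * a' * (ε / (2 * (N + 1))) / (N + 1) ^ k := by rw [sub_div]
    _ ≤ (a' - b') / N ^ k - ε * K * pp / 2 ^ (k + 2) / (N + 1) := by
        linarith

end Aux12

/-- **Theorem (Statement 12).** If `π_inj(Q, H_F^r) > 0` and `H_F^r` is `Q`-degree-stable
with respect to the family of `ℓ`-partite `r`-graphs, then for large `n` the extremal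
value `inj(n, Q, H_F^r)` is attained among `ℓ`-partite `r`-graphs. -/
theorem statement12 (r ℓ : ℕ) (hr : 2 ≤ r)
    (Q : RGraph r) (hiso : NoIsolated Q)
    (F : RGraph 2) (hFc : EdgeCritical F) (hχF : chrNum F = ℓ + 1)
    (hπ : ∃ π : ℝ, 0 < π ∧ Filter.Tendsto
      (fun n : ℕ => (injExExp r Q F n : ℝ) / (n : ℝ) ^ Q.nv) Filter.atTop (nhds π))
    (hstab : ∃ ε : ℝ, 0 < ε ∧ ∃ N₀ : ℕ, ∀ n ≥ N₀, ∀ H : RGraph r, H.nv = n →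
      ExpansionFree r F H →
      (∀ v ∈ H.verts,
        (1 - ε) * (Q.nv : ℝ) * (injExExp r Q F n : ℝ) / (n : ℝ) ≤ (qdeg Q H v : ℝ)) →
      IsPartite H ℓ) :
    ∃ N₁ : ℕ, ∀ n ≥ N₁, injExExp r Q F n = injExPartite r Q ℓ n := by
  obtain ⟨pp, hpp, hπt⟩ := hπ
  obtain ⟨ε₀, hε₀, N₀, hstabf⟩ := hstab
  have hFne : F.edges.Nonempty := by obtain ⟨e₀, he₀, -⟩ := hFc; exact ⟨e₀, he₀⟩
  have hl : 1 ≤ ℓ := ellPos hFc hχF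
  -- basic facts about the two extremal numbers
  have hIne : ∀ n : ℕ,
      {t | ∃ H : RGraph r, H.nv = n ∧ ExpansionFree r F H ∧ injc Q H = t}.Nonempty :=
    fun n => ⟨injc Q (edgeless r n), edgeless r n, edgeless_nv r n,
      edgeless_free hFne n, rfl⟩
  have hIbdd : ∀ n : ℕ, BddAbove
      {t | ∃ H : RGraph r, H.nv = n ∧ ExpansionFree r F H ∧ injc Q H = t} := by
    intro n
    refine ⟨n ^ Q.nv, ?_⟩
    rintro t ⟨H, hH1, -, rfl⟩
    calc injc Q H ≤ H.nv ^ Q.nv := injc_le Q H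
      _ = n ^ Q.nv := by rw [hH1]
  have hImem : ∀ n : ℕ, ∃ H : RGraph r,
      H.nv = n ∧ ExpansionFree r F H ∧ injc Q H = injExExp r Q F n :=
    fun n => Nat.sSup_mem (hIne n) (hIbdd n)
  have hIle : ∀ n : ℕ, ∀ H : RGraph r, H.nv = n → ExpansionFree r F H →
      injc Q H ≤ injExExp r Q F n :=
    fun n H h1 h2 => le_csSup (hIbdd n) ⟨H, h1, h2, rfl⟩
  have hIub : ∀ n : ℕ, injExExp r Q F n ≤ n ^ Q.nv := by
    intro n
    refine csSup_le (hIne n) ?_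
    rintro t ⟨H, hH1, -, rfl⟩
    calc injc Q H ≤ H.nv ^ Q.nv := injc_le Q H
      _ = n ^ Q.nv := by rw [hH1]
  have hPne : ∀ n : ℕ,
      {t | ∃ H : RGraph r, H.nv = n ∧ IsPartite H ℓ ∧ injc Q H = t}.Nonempty :=
    fun n => ⟨injc Q (edgeless r n), edgeless r n, edgeless_nv r n,
      edgeless_partite n ℓ hl, rfl⟩
  have hPbdd : ∀ n : ℕ, BddAbove
      {t | ∃ H : RGraph r, H.nv = n ∧ IsPartite H ℓ ∧ injc Q H = t} := by
    intro n
    refine ⟨n ^ Q.nv, ?_⟩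
    rintro t ⟨H, hH1, -, rfl⟩
    calc injc Q H ≤ H.nv ^ Q.nv := injc_le Q H
      _ = n ^ Q.nv := by rw [hH1]
  have hPmem : ∀ n : ℕ, ∃ H : RGraph r,
      H.nv = n ∧ IsPartite H ℓ ∧ injc Q H = injExPartite r Q ℓ n :=
    fun n => Nat.sSup_mem (hPne n) (hPbdd n)
  have hPle : ∀ n : ℕ, ∀ H : RGraph r, H.nv = n → IsPartite H ℓ →
      injc Q H ≤ injExPartite r Q ℓ n :=
    fun n H h1 h2 => le_csSup (hPbdd n) ⟨H, h1, h2, rfl⟩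
  have hPleI : ∀ n : ℕ, injExPartite r Q ℓ n ≤ injExExp r Q F n := by
    intro n
    refine csSup_le (hPne n) ?_
    rintro t ⟨H, h1, h2, rfl⟩
    exact hIle n H h1 (partite_expansionFree hχF h2)
  -- trivial case: `Q` has no vertices
  by_cases hq0 : Q.nv = 0
  · refine ⟨N₀, fun n hn => ?_⟩
    obtain ⟨H, hH1, hH2, hH3⟩ := hImem n
    have hp : IsPartite H ℓ := by
      apply hstabf n hn H hH1 hH2
      intro v hv
      have h0 : (1 - ε₀) * (Q.nv : ℝ) * (injExExp r Q F n : ℝ) / (n : ℝ) = 0 := by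
        rw [hq0]; simp
      rw [h0]
      positivity
    refine le_antisymm ?_ (hPleI n)
    rw [← hH3]
    exact hPle n H hH1 hp
  have hq1 : 1 ≤ Q.nv := Nat.one_le_iff_ne_zero.2 hq0
  -- replace ε₀ by a small ε
  obtain ⟨ε, hε, hεle, hε1⟩ : ∃ ε : ℝ, 0 < ε ∧ ε ≤ ε₀ ∧ ε ≤ 1 :=
    ⟨min ε₀ (1 / 2), lt_min hε₀ (by norm_num), min_le_left _ _,
      (min_le_right _ _).trans (by norm_num)⟩
  have hstab' : ∀ n : ℕ, N₀ ≤ n → ∀ H : RGraph r, H.nv = n → ExpansionFree r F H →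
      ¬ IsPartite H ℓ → ∃ v ∈ H.verts,
      (qdeg Q H v : ℝ) < (1 - ε) * (Q.nv : ℝ) * (injExExp r Q F n : ℝ) / (n : ℝ) := by
    intro n hn H h1 h2 hp
    by_contra hcon
    push_neg at hcon
    apply hp
    apply hstabf n hn H h1 h2
    intro v hv
    refine le_trans ?_ (hcon v hv)
    have hqI : (0 : ℝ) ≤ (Q.nv : ℝ) * (injExExp r Q F n : ℝ) / (n : ℝ) := by positivity
    calc (1 - ε₀) * (Q.nv : ℝ) * (injExExp r Q F n : ℝ) / (n : ℝ)
        = (1 - ε₀) * ((Q.nv : ℝ) * (injExExp r Q F n : ℝ) / (n : ℝ)) := by ring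
      _ ≤ (1 - ε) * ((Q.nv : ℝ) * (injExExp r Q F n : ℝ) / (n : ℝ)) :=
          mul_le_mul_of_nonneg_right (by linarith) hqI
      _ = (1 - ε) * (Q.nv : ℝ) * (injExExp r Q F n : ℝ) / (n : ℝ) := by ring
  -- lower bound from the convergence hypothesis
  obtain ⟨Nπ, hNπ⟩ := (Metric.tendsto_atTop.1 hπt) (pp / 2) (by positivity)
  have hIlow : ∀ n : ℕ, Nπ ≤ n → 1 ≤ n →
      pp / 2 * (n : ℝ) ^ Q.nv ≤ (injExExp r Q F n : ℝ) := by
    intro n h1 h2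
    have h3 := hNπ n h1
    rw [Real.dist_eq, abs_lt] at h3
    have hn0 : (0 : ℝ) < (n : ℝ) ^ Q.nv := by
      have : (0:ℝ) < (n:ℝ) := by exact_mod_cast h2
      positivity
    have h4 : pp / 2 < (injExExp r Q F n : ℝ) / (n : ℝ) ^ Q.nv := by linarith [h3.1]
    calc pp / 2 * (n : ℝ) ^ Q.nv
        ≤ (injExExp r Q F n : ℝ) / (n : ℝ) ^ Q.nv * (n : ℝ) ^ Q.nv := by nlinarith
      _ = (injExExp r Q F n : ℝ) := by field_simp
  -- the constant
  have hqR : (0 : ℝ) < (Q.nv : ℝ) := by exact_mod_cast hq1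
  obtain ⟨c, hcdef⟩ : ∃ c : ℝ, c = ε * (Q.nv : ℝ) * pp / 2 ^ (Q.nv + 2) := ⟨_, rfl⟩
  have hc : 0 < c := by
    rw [hcdef]
    exact div_pos (mul_pos (mul_pos hε hqR) hpp) (by positivity)
  -- the threshold
  obtain ⟨N₂, hN₂a, hN₂b, hN₂c, hN₂e, hN₂d⟩ :
      ∃ N₂ : ℕ, N₀ ≤ N₂ ∧ Nπ ≤ N₂ ∧ Q.nv + 1 ≤ N₂ ∧ 1 ≤ N₂ ∧
        ∀ n : ℕ, N₂ ≤ n → 2 * (Q.nv : ℝ) ≤ ε * (n : ℝ) := by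
    refine ⟨max (max N₀ Nπ) (max (Q.nv + 1) (⌈(2 * (Q.nv : ℝ)) / ε⌉₊ + 1)),
      ?_, ?_, ?_, ?_, ?_⟩
    · exact le_trans (le_max_left N₀ Nπ) (le_max_left _ _)
    · exact le_trans (le_max_right N₀ Nπ) (le_max_left _ _)
    · exact le_trans (le_max_left _ _) (le_max_right _ _)
    · exact le_trans (by omega : 1 ≤ Q.nv + 1)
        (le_trans (le_max_left _ _) (le_max_right _ _))
    · intro n hn
      have a1 : ⌈(2 * (Q.nv : ℝ)) / ε⌉₊ + 1 ≤ n :=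
        le_trans (le_trans (le_max_right (Q.nv + 1) _)
          (le_max_right (max N₀ Nπ) _)) hn
      have h2 : (2 * (Q.nv : ℝ)) / ε ≤ (n : ℝ) :=
        le_trans (Nat.le_ceil _) (by exact_mod_cast Nat.le_of_succ_le a1)
      rw [div_le_iff₀ hε] at h2
      linarith
  -- the potential function
  obtain ⟨ψ, hψdef⟩ : ∃ ψ : ℕ → ℝ, ψ = fun m =>
      ((injExExp r Q F m : ℝ) - (injExPartite r Q ℓ m : ℝ)) / (m : ℝ) ^ Q.nv :=
    ⟨_, rfl⟩
  have hψ0 : ∀ m : ℕ, 0 ≤ ψ m := by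
    intro m
    simp only [hψdef]
    apply div_nonneg _ (by positivity)
    have := hPleI m
    have h2 : (injExPartite r Q ℓ m : ℝ) ≤ (injExExp r Q F m : ℝ) := by exact_mod_cast this
    linarith
  -- the key one-step estimate
  have hstep : ∀ n : ℕ, N₂ ≤ n →
      injExExp r Q F (n + 1) = injExPartite r Q ℓ (n + 1) ∨
      ψ (n + 1) ≤ ψ n - c / ((n : ℝ) + 1) := by
    intro n hn
    obtain ⟨H, hH1, hH2, hH3⟩ := hImem (n + 1)
    by_cases hp : IsPartite H ℓ
    · left
      refine le_antisymm ?_ (hPleI (n + 1))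
      rw [← hH3]
      exact hPle (n + 1) H hH1 hp
    · right
      -- low-degree vertex from stability
      obtain ⟨v, hv, hvdeg⟩ := hstab' (n + 1) (by omega) H hH1 hH2 hp
      have hdel1 : (H.deleteVert v).nv = n := by rw [deleteVert_nv hv, hH1]; omega
      have hdelI : injc Q (H.deleteVert v) ≤ injExExp r Q F n :=
        hIle n _ hdel1 (expansionFree_mono hH2 (deleteVert_isSubgraph H v))
      have hAnat : injExExp r Q F (n + 1) ≤ qdeg Q H v + injExExp r Q F n := by
        rw [← hH3]
        exact (injc_le_qdeg_add Q H v).trans (by omega)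
      have hA : (injExExp r Q F (n + 1) : ℝ) ≤ (injExExp r Q F n : ℝ)
          + (1 - ε) * (Q.nv : ℝ) * (injExExp r Q F (n + 1) : ℝ) / ((n : ℝ) + 1) := by
        have hc1 : (injExExp r Q F (n + 1) : ℝ)
            ≤ (qdeg Q H v : ℝ) + (injExExp r Q F n : ℝ) := by exact_mod_cast hAnat
        push_cast at hvdeg
        linarith
      -- minimum-degree deletion inequality
      have hvne : H.verts.Nonempty := by
        rw [← Finset.card_pos]
        have hcard : H.verts.card = n + 1 := hH1
        omega
      obtain ⟨v₀, hv₀, hv₀le⟩ := exists_qdeg_le Q H hvne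
      have hv₀le' : (n + 1) * qdeg Q H v₀ ≤ Q.nv * injExExp r Q F (n + 1) := by
        have hcard : H.verts.card = n + 1 := hH1
        rw [hcard] at hv₀le
        rw [← hH3]
        exact hv₀le
      have hdel1' : (H.deleteVert v₀).nv = n := by rw [deleteVert_nv hv₀, hH1]; omega
      have hdelI' : injc Q (H.deleteVert v₀) ≤ injExExp r Q F n :=
        hIle n _ hdel1' (expansionFree_mono hH2 (deleteVert_isSubgraph H v₀))
      have hCnat : (n + 1) * injExExp r Q F (n + 1)
          ≤ Q.nv * injExExp r Q F (n + 1) + (n + 1) * injExExp r Q F n := by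
        have h5 : injExExp r Q F (n + 1)
            ≤ qdeg Q H v₀ + injc Q (H.deleteVert v₀) := by
          rw [← hH3]; exact injc_le_qdeg_add Q H v₀
        calc (n + 1) * injExExp r Q F (n + 1)
            ≤ (n + 1) * (qdeg Q H v₀ + injc Q (H.deleteVert v₀)) :=
              Nat.mul_le_mul_left _ h5
          _ = (n + 1) * qdeg Q H v₀ + (n + 1) * injc Q (H.deleteVert v₀) :=
              Nat.mul_add _ _ _
          _ ≤ Q.nv * injExExp r Q F (n + 1) + (n + 1) * injExExp r Q F n :=
              Nat.add_le_add hv₀le' (Nat.mul_le_mul_left _ hdelI')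
      have hC : ((n : ℝ) + 1 - (Q.nv : ℝ)) * (injExExp r Q F (n + 1) : ℝ)
          ≤ ((n : ℝ) + 1) * (injExExp r Q F n : ℝ) := by
        have := hCnat
        have hcast : ((n + 1 : ℕ) : ℝ) * (injExExp r Q F (n + 1) : ℝ)
            ≤ (Q.nv : ℝ) * (injExExp r Q F (n + 1) : ℝ)
            + ((n + 1 : ℕ) : ℝ) * (injExExp r Q F n : ℝ) := by exact_mod_cast this
        push_cast at hcast
        nlinarith [hcast]
      -- cloning the partite extremal graph
      obtain ⟨Hp, hHp1, hHp2, hHp3⟩ := hPmem n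
      have hpne : Hp.verts.Nonempty := by
        rw [← Finset.card_pos]
        have hcard : Hp.verts.card = n := hHp1
        omega
      obtain ⟨u, hu, hule⟩ := exists_qdeg_ge Q Hp hpne
      have hclone1 : (clone Hp u).nv = n + 1 := by rw [clone_nv, hHp1]
      have hcloneP : injc Q (clone Hp u) ≤ injExPartite r Q ℓ (n + 1) :=
        hPle (n + 1) _ hclone1 (clone_partite hHp2 hu)
      have hBnat : n * injExPartite r Q ℓ n + Q.nv * injExPartite r Q ℓ n
          ≤ n * injExPartite r Q ℓ (n + 1) := by
        have h6 := injc_clone Q Hp hu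
        have hcard : Hp.verts.card = n := hHp1
        rw [hcard] at hule
        rw [hHp3] at h6 hule
        calc n * injExPartite r Q ℓ n + Q.nv * injExPartite r Q ℓ n
            ≤ n * injExPartite r Q ℓ n + n * qdeg Q Hp u := by omega
          _ = n * (injExPartite r Q ℓ n + qdeg Q Hp u) := (Nat.mul_add _ _ _).symm
          _ ≤ n * injc Q (clone Hp u) := Nat.mul_le_mul_left _ h6
          _ ≤ n * injExPartite r Q ℓ (n + 1) := Nat.mul_le_mul_left _ hcloneP
      have hB : ((n : ℝ) + (Q.nv : ℝ)) * (injExPartite r Q ℓ n : ℝ)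
          ≤ (n : ℝ) * (injExPartite r Q ℓ (n + 1) : ℝ) := by
        have hcast : (n : ℝ) * (injExPartite r Q ℓ n : ℝ)
            + (Q.nv : ℝ) * (injExPartite r Q ℓ n : ℝ)
            ≤ (n : ℝ) * (injExPartite r Q ℓ (n + 1) : ℝ) := by exact_mod_cast hBnat
        linarith
      -- the arithmetic
      have harith := arith_main Q.nv ((n : ℝ)) ((Q.nv : ℝ)) ε pp
        (injExExp r Q F (n + 1) : ℝ) (injExExp r Q F n : ℝ)
        (injExPartite r Q ℓ (n + 1) : ℝ) (injExPartite r Q ℓ n : ℝ)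
        rfl (by exact_mod_cast hq1)
        (by exact_mod_cast (show Q.nv + 1 ≤ n by omega))
        hε hε1 hpp (hN₂d n hn) (hIlow n (by omega) (by omega))
        (by positivity) (by exact_mod_cast hPleI n)
        hA hB hC
      simp only [hψdef, hcdef]
      push_cast
      convert harith using 2
  -- once equal, always equal
  have honce : ∀ n : ℕ, N₂ ≤ n → injExExp r Q F n = injExPartite r Q ℓ n →
      injExExp r Q F (n + 1) = injExPartite r Q ℓ (n + 1) := by
    intro n hn heq
    rcases hstep n hn with h | h
    · exact h
    · exfalso
      have h1 : ψ n = 0 := by simp only [hψdef, heq, sub_self, zero_div]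
      have h2 : 0 ≤ ψ (n + 1) := hψ0 (n + 1)
      have h3 : 0 < c / ((n : ℝ) + 1) := by positivity
      rw [h1] at h
      linarith
  -- there is a first place where the two extremal numbers agree
  have hzero : ∃ n₀ : ℕ, N₂ ≤ n₀ ∧ injExExp r Q F n₀ = injExPartite r Q ℓ n₀ := by
    by_contra hcon
    push_neg at hcon
    have hdec : ∀ n : ℕ, N₂ ≤ n → ψ (n + 1) ≤ ψ n - c / ((n : ℝ) + 1) :=
      fun n hn => (hstep n hn).resolve_left (hcon (n + 1) (by omega))
    set T : ℕ → ℝ := fun M => ∑ i ∈ Finset.range M, (1 / (i + 1) : ℝ) with hTdef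
    have hkey : ∀ j : ℕ, ψ (N₂ + j) + c * T (N₂ + j) ≤ ψ N₂ + c * T N₂ := by
      intro j
      induction j with
      | zero => simp
      | succ j ih =>
        have hd := hdec (N₂ + j) (by omega)
        have hT : T (N₂ + j + 1) = T (N₂ + j) + 1 / (((N₂ + j : ℕ) : ℝ) + 1) := by
          rw [hTdef]
          exact Finset.sum_range_succ _ _
        show ψ (N₂ + j + 1) + c * T (N₂ + j + 1) ≤ ψ N₂ + c * T N₂
        rw [hT]
        have hTe : c * (T (N₂ + j) + 1 / (((N₂ + j : ℕ) : ℝ) + 1))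
            = c * T (N₂ + j) + c / (((N₂ + j : ℕ) : ℝ) + 1) := by
          rw [mul_add, mul_one_div]
        rw [hTe]
        linarith
    have hψN₂ : ψ N₂ ≤ 1 := by
      simp only [hψdef]
      rw [div_le_one (by
        have : (0:ℝ) < (N₂ : ℝ) := by exact_mod_cast hN₂e
        positivity)]
      have h4 : (injExExp r Q F N₂ : ℝ) ≤ (N₂ : ℝ) ^ Q.nv := by
        exact_mod_cast hIub N₂
      have h5 : (0 : ℝ) ≤ (injExPartite r Q ℓ N₂ : ℝ) := by positivity
      linarith
    have hbound : ∀ j : ℕ, c * T (N₂ + j) ≤ 1 + c * T N₂ := by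
      intro j
      have h1 := hkey j
      have h2 := hψ0 (N₂ + j)
      linarith
    have hTtop : Filter.Tendsto T Filter.atTop Filter.atTop := by
      rw [hTdef]
      exact Real.tendsto_sum_range_one_div_nat_succ_atTop
    obtain ⟨M, hM1, hM2⟩ := ((hTtop.eventually_ge_atTop ((1 + c * T N₂ + 1) / c)).and
      (Filter.eventually_ge_atTop N₂)).exists
    have h6 := hbound (M - N₂)
    rw [Nat.add_sub_cancel' hM2] at h6
    rw [div_le_iff₀ hc] at hM1
    nlinarith
  obtain ⟨n₀, hn₀, heq₀⟩ := hzero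
  refine ⟨n₀, fun n hn => ?_⟩
  induction n, hn using Nat.le_induction with
  | base => exact heq₀
  | succ n hn ih => exact honce n (le_trans hn₀ hn) ih

end
end
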